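/- arXiv:0904.3436 — 9 statements merged into one kernel-verified Lean document; each statement's English description precedes it below -/
import Mathlib

section
/- Let K be a tropical polyhedral cone in R_max^d generated by a finite set G, and let H = {x | a·x ≤ b·x} be a tropical halfspace given by row vectors a, b ∈ R_max^{1×d} (where a·x denotes max_i (a_i + x_i)). Then the intersection K ∩ H is the tropical cone generated by the set {g ∈ G | a·g ≤ b·g} ∪ {(a·h)·g ⊕ (b·g)·h | g, h ∈ G, a·g ≤ b·g, a·h > b·h}, where (λ)·g denotes tropical scalar multiplication (adding λ to every coordinate) and ⊕ denotes coordinatewise max. -/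
open scoped Classical

noncomputable section

/-- The max-plus semiring `ℝ ∪ {-∞}`: addition is `max` (the lattice `⊔`),
multiplication is `+` (with `⊥ + x = ⊥`). -/
abbrev Rmax := WithBot ℝ

/-- Tropical "dot product" `a·x = max_i (a_i + x_i)`. -/
def dotp {d : ℕ} (a x : Fin d → Rmax) : Rmax := Finset.univ.sup fun i => a i + x i

/-- A tropical (polyhedral) cone: closed under coordinatewise max and
tropical scalar multiplication (adding a scalar to every coordinate). -/
def IsTropCone {d : ℕ} (C : Set (Fin d → Rmax)) : Prop :=
  (∀ x ∈ C, ∀ y ∈ C, x ⊔ y ∈ C) ∧ (∀ x ∈ C, ∀ lam : Rmax, (fun i => lam + x i) ∈ C)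

/-- `g` is extreme in `C`: `g ∈ C` and `g = v ⊔ w` with `v, w ∈ C` forces `g = v` or `g = w`. -/
def TropExtreme {ι : Type*} (C : Set (ι → Rmax)) (g : ι → Rmax) : Prop :=
  g ∈ C ∧ ∀ v ∈ C, ∀ w ∈ C, g = v ⊔ w → g = v ∨ g = w

/-- `g` is extreme of type `t` in `C`: `g` is minimal in `{x ∈ C | x t = g t}`. -/
def ExtremeType {ι : Type*} (C : Set (ι → Rmax)) (g : ι → Rmax) (t : ι) : Prop :=
  g ∈ C ∧ ∀ x ∈ C, x ≤ g → x t = g t → x = g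

/-- The tropical cone defined by the system of inequalities `A·x ≤ B·x`. -/
def coneOf {d n : ℕ} (A B : Fin n → Fin d → Rmax) : Set (Fin d → Rmax) :=
  { x | ∀ k, dotp (A k) x ≤ dotp (B k) x }

/-- `argmax(c·g) = {i | c_i + g_i = c·g}`. -/
def argmaxSet {d : ℕ} (c g : Fin d → Rmax) : Finset (Fin d) :=
  Finset.univ.filter fun i => c i + g i = dotp c g

/-- The tangent cone of `{x | A·x ≤ B·x}` at `g`. -/
def tangentCone {d n : ℕ} (A B : Fin n → Fin d → Rmax) (g : Fin d → Rmax) :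
    Set (Fin d → Rmax) :=
  { x | ∀ k, dotp (A k) g = dotp (B k) g →
      (argmaxSet (A k) g).sup x ≤ (argmaxSet (B k) g).sup x }

/-- The tropical cone generated by a finite set `G`: all tropical linear
combinations `⊕_{g ∈ G} λ_g ⊗ g`. -/
def genCone {d : ℕ} (G : Finset (Fin d → Rmax)) : Set (Fin d → Rmax) :=
  { x | ∃ lam : (Fin d → Rmax) → Rmax, x = fun i => G.sup fun g => lam g + g i }

lemma radd_sup (c x y : Rmax) : c + (x ⊔ y) = (c + x) ⊔ (c + y) := by
  rcases le_total x y with h | h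
  · simp [max_eq_right h, max_eq_right (add_le_add_right h c)]
  · simp [max_eq_left h, max_eq_left (add_le_add_right h c)]

lemma sup_radd (c x y : Rmax) : (x ⊔ y) + c = (x + c) ⊔ (y + c) := by
  rw [add_comm, radd_sup, add_comm c, add_comm c]

lemma add_fsup {ι : Type*} (c : Rmax) (s : Finset ι) (f : ι → Rmax) :
    c + s.sup f = s.sup fun i => c + f i := by
  induction s using Finset.cons_induction with
  | empty => simp
  | cons a s ha ih => simp [Finset.sup_cons, radd_sup, ih]

lemma fsup_add {ι : Type*} (c : Rmax) (s : Finset ι) (f : ι → Rmax) :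
    s.sup f + c = s.sup fun i => f i + c := by
  rw [add_comm, add_fsup]; simp [add_comm]

lemma fsup_sup {ι : Type*} (s : Finset ι) (f g : ι → Rmax) :
    s.sup (fun i => f i ⊔ g i) = s.sup f ⊔ s.sup g := by
  apply le_antisymm
  · exact Finset.sup_le fun i hi => sup_le_sup (Finset.le_sup hi) (Finset.le_sup hi)
  · exact sup_le (Finset.sup_mono_fun fun i _ => le_sup_left)
      (Finset.sup_mono_fun fun i _ => le_sup_right)

lemma dotp_comb {d : ℕ} {ι : Type*} (c : Fin d → Rmax) (s : Finset ι)
    (lam : ι → Rmax) (f : ι → Fin d → Rmax) :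
    dotp c (fun j => s.sup fun i => lam i + f i j) =
      s.sup fun i => lam i + dotp c (f i) := by
  unfold dotp
  simp_rw [add_fsup]
  rw [Finset.sup_comm]
  refine Finset.sup_congr rfl fun i _ => ?_
  exact Finset.sup_congr rfl fun j _ => by rw [add_left_comm]

lemma dotp_bin {d : ℕ} (c u v : Fin d → Rmax) (α β : Rmax) :
    dotp c (fun j => (α + u j) ⊔ (β + v j)) = (α + dotp c u) ⊔ (β + dotp c v) := by
  have h1 : ∀ (γ : Rmax) (w : Fin d → Rmax),
      (Finset.univ.sup fun j => c j + (γ + w j)) = γ + dotp c w := by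
    intro γ w
    rw [dotp, add_fsup]
    exact Finset.sup_congr rfl fun j _ => by rw [add_left_comm]
  unfold dotp
  simp_rw [radd_sup]
  rw [fsup_sup, h1, h1]; rfl

lemma mem_genCone_family {d : ℕ} {ι : Type*} {G : Finset (Fin d → Rmax)}
    (s : Finset ι) (f : ι → Fin d → Rmax) (c : ι → Rmax)
    (hf : ∀ i ∈ s, f i ∈ G) :
    (fun j => s.sup fun i => c i + f i j) ∈ genCone G := by
  classical
  refine ⟨fun z => (s.filter fun i => f i = z).sup c, ?_⟩
  funext j
  apply le_antisymm
  · apply Finset.sup_le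
    intro i hi
    calc c i + f i j ≤ (s.filter fun i' => f i' = f i).sup c + f i j := by
          gcongr
          exact Finset.le_sup (f := c) (Finset.mem_filter.2 ⟨hi, rfl⟩)
      _ ≤ _ := Finset.le_sup (f := fun z => (s.filter fun i' => f i' = z).sup c + z j) (hf i hi)
  · apply Finset.sup_le
    intro z _
    rw [fsup_add]
    apply Finset.sup_le
    intro i hi
    obtain ⟨his, hfz⟩ := Finset.mem_filter.1 hi
    subst hfz
    exact Finset.le_sup (f := fun i => c i + f i j) his

lemma genCone_sup {d : ℕ} {G : Finset (Fin d → Rmax)} {x y : Fin d → Rmax}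
    (hx : x ∈ genCone G) (hy : y ∈ genCone G) : x ⊔ y ∈ genCone G := by
  obtain ⟨l1, rfl⟩ := hx
  obtain ⟨l2, rfl⟩ := hy
  refine ⟨fun z => l1 z ⊔ l2 z, ?_⟩
  funext j
  show (G.sup fun g => l1 g + g j) ⊔ (G.sup fun g => l2 g + g j) = _
  rw [← Finset.sup_sup]
  refine Finset.sup_congr rfl fun g _ => ?_
  simp only [Pi.sup_apply]
  exact (sup_radd (g j) (l1 g) (l2 g)).symm

/-- Th. 1 (elementary step of the double description method): the intersection
of the cone generated by `G` with the halfspace `{x | a·x ≤ b·x}` is generated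
by the elements of `G` satisfying the inequality together with the combinations
`(a·h)·g ⊕ (b·g)·h` for `g` satisfying it and `h` violating it. -/
theorem stmt0 {d : ℕ} (G : Finset (Fin d → Rmax)) (a b : Fin d → Rmax) :
    genCone G ∩ { x | dotp a x ≤ dotp b x } =
      genCone
        ((G.filter fun g => dotp a g ≤ dotp b g) ∪
          ((G ×ˢ G).filter
              (fun p => dotp a p.1 ≤ dotp b p.1 ∧ dotp b p.2 < dotp a p.2)).image
            (fun p => fun i => (dotp a p.2 + p.1 i) ⊔ (dotp b p.1 + p.2 i))) := by
  classical
  set A := G.filter fun g => dotp a g ≤ dotp b g with hAdef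
  set pairs := (G ×ˢ G).filter
      (fun p => dotp a p.1 ≤ dotp b p.1 ∧ dotp b p.2 < dotp a p.2) with hPdef
  set zf : (Fin d → Rmax) × (Fin d → Rmax) → Fin d → Rmax :=
      fun p => fun i => (dotp a p.2 + p.1 i) ⊔ (dotp b p.1 + p.2 i) with hzf
  -- generator properties
  have hzmem : ∀ p ∈ pairs, zf p ∈ A ∪ pairs.image zf := fun p hp =>
    Finset.mem_union_right _ (Finset.mem_image_of_mem zf hp)
  have hzsat : ∀ z ∈ A ∪ pairs.image zf, dotp a z ≤ dotp b z := by
    intro z hz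
    rcases Finset.mem_union.1 hz with hz | hz
    · exact (Finset.mem_filter.1 hz).2
    · obtain ⟨p, hp, rfl⟩ := Finset.mem_image.1 hz
      obtain ⟨-, h1, h2⟩ := Finset.mem_filter.1 hp
      show dotp a (zf p) ≤ dotp b (zf p)
      rw [hzf]
      rw [dotp_bin, dotp_bin]
      apply sup_le
      · exact le_sup_of_le_left (by gcongr)
      · exact le_sup_of_le_left (by rw [add_comm])
  ext x
  constructor
  · rintro ⟨⟨lam, rfl⟩, hx⟩
    set B := G.filter fun g => ¬ dotp a g ≤ dotp b g with hBdef
    have hGsplit : A ∪ B = G := Finset.filter_union_filter_not_eq _ G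
    have hBlt : ∀ h ∈ B, dotp b h < dotp a h := fun h hh =>
      lt_of_not_ge (Finset.mem_filter.1 hh).2
    have hBa : ∀ h ∈ B, dotp a h ≠ ⊥ := fun h hh =>
      (bot_le.trans_lt (hBlt h hh)).ne'
    have hxa : dotp a (fun j => G.sup fun g => lam g + g j) =
        G.sup fun g => lam g + dotp a g := dotp_comb a G lam (fun g => g)
    have hxb : dotp b (fun j => G.sup fun g => lam g + g j) =
        G.sup fun g => lam g + dotp b g := dotp_comb b G lam (fun g => g)
    rw [Set.mem_setOf_eq, hxa, hxb] at hx
    -- the b-sup is attained on A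
    have hT : (G.sup fun g => lam g + dotp b g) ≤ A.sup fun g => lam g + dotp b g := by
      rw [← hGsplit, Finset.sup_union]
      refine sup_le le_rfl ?_
      by_contra hc
      push_neg at hc
      have hBposb : (⊥ : Rmax) < B.sup fun g => lam g + dotp b g :=
        lt_of_le_of_lt bot_le hc
      have hBne : B.Nonempty := by
        rcases B.eq_empty_or_nonempty with h | h
        · rw [h] at hBposb; simp at hBposb
        · exact h
      obtain ⟨h0, hh0, hsup0⟩ := Finset.exists_mem_eq_sup B hBne fun g => lam g + dotp b g
      have hl0 : lam h0 ≠ ⊥ := by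
        intro hl
        rw [hsup0, hl, WithBot.bot_add] at hBposb
        exact lt_irrefl _ hBposb
      have hstep : lam h0 + dotp b h0 < lam h0 + dotp a h0 :=
        WithBot.add_lt_add_left hl0 (hBlt h0 hh0)
      have h1 : lam h0 + dotp a h0 ≤ G.sup fun g => lam g + dotp a g :=
        Finset.le_sup (f := fun g => lam g + dotp a g) (Finset.mem_of_mem_filter h0 hh0)
      have h2 : (G.sup fun g => lam g + dotp b g) ≤ lam h0 + dotp b h0 := by
        rw [← hGsplit, Finset.sup_union, ← hsup0]
        exact sup_le hc.le le_rfl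
      exact absurd ((h1.trans hx).trans h2) (not_le_of_gt hstep)
    -- choice of the witness g* for each violator
    have hgex : ∀ h, h ∈ B → lam h ≠ ⊥ →
        ∃ g, g ∈ A ∧ lam h + dotp a h ≤ lam g + dotp b g := by
      intro h hh hlh
      have hne : lam h + dotp a h ≠ ⊥ := fun hb =>
        (WithBot.add_eq_bot.1 hb).elim hlh (hBa h hh)
      have hle : lam h + dotp a h ≤ A.sup fun g => lam g + dotp b g :=
        ((Finset.le_sup (f := fun g => lam g + dotp a g)
          (Finset.mem_of_mem_filter h hh)).trans hx).trans hT
      have hAne : A.Nonempty := by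
        rcases A.eq_empty_or_nonempty with h' | h'
        · rw [h'] at hle; simp only [Finset.sup_empty, le_bot_iff] at hle
          exact absurd hle hne
        · exact h'
      obtain ⟨g, hg, hge⟩ := Finset.exists_mem_eq_sup A hAne fun g => lam g + dotp b g
      exact ⟨g, hg, hle.trans hge.le⟩
    set F : (Fin d → Rmax) → (Fin d → Rmax) := fun h =>
      if hc : ∃ g, g ∈ A ∧ lam h + dotp a h ≤ lam g + dotp b g then hc.choose
      else (fun _ => ⊥) with hFdef
    set nu : (Fin d → Rmax) → Rmax := fun h =>
      lam h + ↑(-(WithBot.unbotD 0 (dotp b (F h)))) with hnudef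
    set B' := B.filter fun h => lam h ≠ ⊥ with hB'def
    -- key properties of F, nu on B'
    have hkey : ∀ h ∈ B', F h ∈ A ∧ nu h + dotp b (F h) = lam h ∧
        nu h + dotp a h ≤ lam (F h) := by
      intro h hh
      obtain ⟨hhB, hlh⟩ := Finset.mem_filter.1 hh
      have hc : ∃ g, g ∈ A ∧ lam h + dotp a h ≤ lam g + dotp b g := hgex h hhB hlh
      have hFh : F h = hc.choose := by rw [hFdef]; simp [hc]
      obtain ⟨hgA, hgle⟩ := hc.choose_spec
      have hne : lam h + dotp a h ≠ ⊥ := fun hb =>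
        (WithBot.add_eq_bot.1 hb).elim hlh (hBa h hhB)
      have hbot : lam hc.choose + dotp b hc.choose ≠ ⊥ := fun hb => hne (le_bot_iff.1 (hb ▸ hgle))
      have hbF : dotp b hc.choose ≠ ⊥ := fun hb => hbot (by rw [hb, WithBot.add_bot])
      obtain ⟨s, hs⟩ := WithBot.ne_bot_iff_exists.1 hbF
      have hunb : WithBot.unbotD 0 (dotp b (F h)) = s := by rw [hFh, ← hs]; rfl
      refine ⟨hFh ▸ hgA, ?_, ?_⟩
      · rw [hnudef]
        show lam h + ↑(-(WithBot.unbotD 0 (dotp b (F h)))) + dotp b (F h) = lam h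
        rw [hunb, hFh, ← hs, add_assoc, ← WithBot.coe_add, neg_add_cancel]
        simp
      · rw [hnudef]
        show lam h + ↑(-(WithBot.unbotD 0 (dotp b (F h)))) + dotp a h ≤ lam (F h)
        rw [hunb, hFh]
        have h2 : lam hc.choose + ↑s + ↑(-s) = lam hc.choose := by
          rw [add_assoc, ← WithBot.coe_add, add_neg_cancel]; simp
        calc lam h + ↑(-s) + dotp a h = lam h + dotp a h + ↑(-s) := by
              rw [add_right_comm]
          _ ≤ lam hc.choose + dotp b hc.choose + ↑(-s) := add_le_add_left hgle _
          _ = lam hc.choose := by rw [← hs, h2]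
    -- the decomposition of x
    have hdecomp : (fun j => G.sup fun g => lam g + g j) =
        ((fun j => A.sup fun g => lam g + g j) ⊔
          (fun j => B'.sup fun h => nu h + zf (F h, h) j)) := by
      funext j
      simp only [Pi.sup_apply]
      apply le_antisymm
      · rw [← hGsplit, Finset.sup_union]
        refine sup_le (le_sup_left) (le_trans (Finset.sup_le fun h hh => ?_) le_sup_right)
        by_cases hlh : lam h = ⊥
        · simp [hlh]
        · have hh' : h ∈ B' := Finset.mem_filter.2 ⟨hh, hlh⟩
          obtain ⟨-, hp1, -⟩ := hkey h hh'
          calc lam h + h j = nu h + dotp b (F h) + h j := by rw [hp1]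
            _ = nu h + (dotp b (F h) + h j) := add_assoc _ _ _
            _ ≤ nu h + zf (F h, h) j := add_le_add_right le_sup_right _
            _ ≤ _ := Finset.le_sup (f := fun h => nu h + zf (F h, h) j) hh'
      · refine sup_le (Finset.sup_le fun g hg =>
          Finset.le_sup (f := fun g => lam g + g j) (Finset.mem_of_mem_filter g hg))
          (Finset.sup_le fun h hh => ?_)
        obtain ⟨hFA, hp1, hp2⟩ := hkey h hh
        have hz : nu h + zf (F h, h) j =
            (nu h + (dotp a h + F h j)) ⊔ (nu h + (dotp b (F h) + h j)) := by
          rw [hzf]; exact radd_sup _ _ _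
        rw [hz]
        refine sup_le ?_ ?_
        · rw [← add_assoc]
          calc nu h + dotp a h + F h j ≤ lam (F h) + F h j := by gcongr
            _ ≤ _ := Finset.le_sup (f := fun g => lam g + g j) (Finset.mem_of_mem_filter _ hFA)
        · rw [← add_assoc, hp1]
          exact Finset.le_sup (f := fun g => lam g + g j)
            (Finset.mem_of_mem_filter _ (Finset.mem_of_mem_filter h hh))
    rw [hdecomp]
    refine genCone_sup ?_ ?_
    · exact mem_genCone_family A _ lam fun g hg => Finset.mem_union_left _ hg
    · refine mem_genCone_family B' (fun h => zf (F h, h)) nu fun h hh => ?_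
      obtain ⟨hFA, -, -⟩ := hkey h hh
      refine hzmem _ (Finset.mem_filter.2 ⟨Finset.mem_product.2
        ⟨Finset.mem_of_mem_filter _ hFA,
         Finset.mem_of_mem_filter _ (Finset.mem_of_mem_filter h hh)⟩,
        (Finset.mem_filter.1 hFA).2, hBlt h (Finset.mem_of_mem_filter h hh)⟩)
  · rintro ⟨lam, rfl⟩
    constructor
    · -- membership in genCone G
      have hx : (fun j => (A ∪ pairs.image zf).sup fun z => lam z + z j) =
          ((fun j => A.sup fun g => lam g + g j) ⊔
            ((fun j => pairs.sup fun p => (lam (zf p) + dotp a p.2) + p.1 j) ⊔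
             (fun j => pairs.sup fun p => (lam (zf p) + dotp b p.1) + p.2 j))) := by
        funext j
        simp only [Pi.sup_apply]
        rw [Finset.sup_union, Finset.sup_image]
        congr 1
        rw [← fsup_sup]
        refine Finset.sup_congr rfl fun p _ => ?_
        show lam (zf p) + zf p j = _
        rw [hzf]
        show lam (zf p) + ((dotp a p.2 + p.1 j) ⊔ (dotp b p.1 + p.2 j)) = _
        rw [radd_sup, ← add_assoc, ← add_assoc]
      rw [hx]
      refine genCone_sup ?_ (genCone_sup ?_ ?_)
      · exact mem_genCone_family A _ lam fun g hg => Finset.mem_of_mem_filter g hg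
      · exact mem_genCone_family pairs Prod.fst _ fun p hp =>
          (Finset.mem_product.1 (Finset.mem_of_mem_filter p hp)).1
      · exact mem_genCone_family pairs Prod.snd _ fun p hp =>
          (Finset.mem_product.1 (Finset.mem_of_mem_filter p hp)).2
    · -- halfspace
      show dotp a _ ≤ dotp b _
      rw [dotp_comb a _ lam (fun z => z), dotp_comb b _ lam (fun z => z)]
      exact Finset.sup_mono_fun fun z hz => add_le_add_right (hzsat z hz) _
end
end

section
/- Let C ⊆ R_max^d be a tropical polyhedral cone, g ∈ C a nonzero element, and S = supp(g) = {i | g_i ≠ -∞}. Let D = {x ∈ C | supp(x) ⊆ S} and let π_S be the projection onto the coordinates in S. Then the following are equivalent: (i) g is extreme in C; (ii) g is extreme in D; (iii) π_S(g) is extreme in π_S(D). -/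
open scoped Classical

noncomputable section

/-- The support of a vector: coordinates different from `-∞`. -/
def supp {d : ℕ} (x : Fin d → Rmax) : Set (Fin d) := { i | x i ≠ ⊥ }

/-- Prop.: extremality of `g` in `C`, in `D = {x ∈ C | supp x ⊆ supp g}`, and of
the projection of `g` on its support in the projection of `D`, are equivalent. -/
theorem stmt3 {d : ℕ} (C : Set (Fin d → Rmax)) (hC : IsTropCone C)
    (g : Fin d → Rmax) (hg : g ∈ C) (hg0 : g ≠ fun _ => (⊥ : Rmax)) :
    (TropExtreme C g ↔ TropExtreme { x ∈ C | supp x ⊆ supp g } g) ∧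
      (TropExtreme { x ∈ C | supp x ⊆ supp g } g ↔
        TropExtreme ((supp g).restrict '' { x ∈ C | supp x ⊆ supp g })
          ((supp g).restrict g)) := by

  have hgD : g ∈ { x ∈ C | supp x ⊆ supp g } := ⟨hg, fun i hi => hi⟩
  have hle_supp : ∀ v : Fin d → Rmax, v ≤ g → supp v ⊆ supp g := by
    intro v hv i hi hbot
    exact hi (le_bot_iff.mp (hbot ▸ hv i))
  have hinj : ∀ x ∈ { x ∈ C | supp x ⊆ supp g }, ∀ y ∈ { x ∈ C | supp x ⊆ supp g },
      (supp g).restrict x = (supp g).restrict y → x = y := by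
    intro x hx y hy h
    funext i
    by_cases hi : i ∈ supp g
    · exact congrFun h ⟨i, hi⟩
    · have hx' : x i = ⊥ := not_not.mp fun h' => hi (hx.2 h')
      have hy' : y i = ⊥ := not_not.mp fun h' => hi (hy.2 h')
      rw [hx', hy']
  have hDsup : ∀ v ∈ { x ∈ C | supp x ⊆ supp g }, ∀ w ∈ { x ∈ C | supp x ⊆ supp g },
      v ⊔ w ∈ { x ∈ C | supp x ⊆ supp g } := by
    intro v hv w hw
    refine ⟨hC.1 v hv.1 w hw.1, fun i hi => ?_⟩
    by_contra hiS
    have hvi : v i = ⊥ := not_not.mp fun h' => hiS (hv.2 h')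
    have hwi : w i = ⊥ := not_not.mp fun h' => hiS (hw.2 h')
    exact hi (by simp [Pi.sup_apply, hvi, hwi])
  have hres : ∀ v w : Fin d → Rmax,
      (supp g).restrict (v ⊔ w) = (supp g).restrict v ⊔ (supp g).restrict w := fun v w => rfl
  constructor
  · constructor
    · rintro ⟨_, hext⟩
      exact ⟨hgD, fun v hv w hw h => hext v hv.1 w hw.1 h⟩
    · rintro ⟨_, hext⟩
      refine ⟨hg, fun v hv w hw h => ?_⟩
      have hvle : v ≤ g := h ▸ le_sup_left
      have hwle : w ≤ g := h ▸ le_sup_right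
      exact hext v ⟨hv, hle_supp v hvle⟩ w ⟨hw, hle_supp w hwle⟩ h
  · constructor
    · rintro ⟨_, hext⟩
      refine ⟨⟨g, hgD, rfl⟩, ?_⟩
      rintro _ ⟨v, hv, rfl⟩ _ ⟨w, hw, rfl⟩ h
      have hvw := hDsup v hv w hw
      have hg' : g = v ⊔ w := hinj g hgD (v ⊔ w) hvw (by rw [hres]; exact h)
      rcases hext v hv w hw hg' with h' | h'
      · exact Or.inl (congrArg _ h')
      · exact Or.inr (congrArg _ h')
    · rintro ⟨_, hext⟩
      refine ⟨hgD, fun v hv w hw h => ?_⟩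
      have h' : (supp g).restrict g = (supp g).restrict v ⊔ (supp g).restrict w := by
        rw [← hres]; exact congrArg _ h
      rcases hext _ ⟨v, hv, rfl⟩ _ ⟨w, hw, rfl⟩ h' with h'' | h''
      · exact Or.inl (hinj g hgD v hv h'')
      · exact Or.inr (hinj g hgD w hw h'')
end
end

section
/- Let D ⊆ R_max^d be a tropical cone defined by a system C·x ≤ D·x where all the entries of the matrices C, D lie in {-∞, 0} (i.e., D is the solution set of finitely many inequalities of the form max_{i ∈ I_k} x_i ≤ max_{j ∈ J_k} x_j for subsets I_k, J_k of {1,...,d}). Then the all-zeros vector 𝟙 (every coordinate equal to 0) is extreme of type t in D if and only if 𝟙 is the unique element x of D ∩ {-∞, 0}^d satisfying x_t = 0. -/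
open scoped Classical

noncomputable section

/-- Prop.: in a `{0,-∞}`-cone `D` (defined by constraints
`max_{i ∈ I k} x_i ≤ max_{j ∈ J k} x_j`), the all-zeros vector `𝟙` is extreme of
type `t` iff it is the unique element `x` of `D ∩ {-∞,0}^d` with `x t = 0`. -/
theorem stmt4 {d n : ℕ} (I J : Fin n → Finset (Fin d)) (t : Fin d) :
    ExtremeType { x : Fin d → Rmax | ∀ k, (I k).sup x ≤ (J k).sup x }
        (fun _ => (0 : Rmax)) t ↔
      ((fun _ => (0 : Rmax)) ∈ { x : Fin d → Rmax | ∀ k, (I k).sup x ≤ (J k).sup x } ∧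
        ∀ x ∈ { x : Fin d → Rmax | ∀ k, (I k).sup x ≤ (J k).sup x },
          (∀ i, x i = ⊥ ∨ x i = 0) → x t = 0 → x = fun _ => (0 : Rmax)) := by
  constructor
  · rintro ⟨hg, hext⟩
    refine ⟨hg, fun x hx hb ht => hext x hx (fun i => ?_) ht⟩
    rcases hb i with h | h <;> simp [h]
  · rintro ⟨hg, huniq⟩
    refine ⟨hg, fun x hx hle hxt => ?_⟩
    set y : Fin d → Rmax := fun i => if x i = 0 then (0 : Rmax) else ⊥ with hy
    have hycone : y ∈ { x : Fin d → Rmax | ∀ k, (I k).sup x ≤ (J k).sup x } := by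
      intro k
      by_cases hI : ∃ i ∈ I k, x i = 0
      · obtain ⟨i, hiI, hi0⟩ := hI
        have hsupx : (0 : Rmax) ≤ (J k).sup x :=
          le_trans (by rw [← hi0]; exact Finset.le_sup hiI) (hx k)
        have h0bot : (⊥ : Rmax) < 0 := bot_lt_iff_ne_bot.mpr (by simp)
        obtain ⟨j, hjJ, hj⟩ := (Finset.le_sup_iff h0bot).mp hsupx
        have hj0 : x j = 0 := le_antisymm (hle j) hj
        calc (I k).sup y ≤ 0 := Finset.sup_le fun i _ => by
              by_cases h : x i = 0 <;> simp [hy, h]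
          _ ≤ (J k).sup y := by
              refine le_trans ?_ (Finset.le_sup hjJ)
              simp [hy, hj0]
      · push_neg at hI
        have : (I k).sup y = ⊥ := by
          refine (Finset.sup_eq_bot_iff _ _).mpr fun i hi => ?_
          simp [hy, hI i hi]
        simp [this]
    have hyb : ∀ i, y i = ⊥ ∨ y i = 0 := fun i => by
      by_cases h : x i = 0 <;> simp [hy, h]
    have hyt : y t = 0 := by simp [hy, hxt]
    have := huniq y hycone hyb hyt
    funext i
    have : y i = 0 := by rw [this]
    by_cases h : x i = 0
    · exact h
    · simp [hy, h] at this
end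
end

section
/- Let C = {x ∈ R_max^d | A·x ≤ B·x} be a tropical cone defined by n inequalities, and let g ∈ C with supp(g) = {1,...,d}. Define the tangent cone T(g,C) as the set of x ∈ R_max^d satisfying, for each row k with A_k·g = B_k·g, the inequality max_{i ∈ argmax(A_k·g)} x_i ≤ max_{j ∈ argmax(B_k·g)} x_j. Then there exists a neighborhood N of g such that for all x ∈ N, x ∈ C if and only if x - g ∈ T(g,C) (where subtraction is coordinatewise, valid since all g_i are finite). -/
open scoped Classical

noncomputable section

instance : TopologicalSpace Rmax := Preorder.topology Rmax

-- auxiliary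
instance Rmax.instOrderTopology : OrderTopology Rmax := ⟨rfl⟩

lemma Rmax.addc (a : Rmax) (b c : ℝ) : a + (b : Rmax) + (c : Rmax) = a + ((b + c : ℝ) : Rmax) := by
  rw [add_assoc, ← WithBot.coe_add]

lemma Rmax.add_le_right {u v : Rmax} (r : ℝ) (h : u ≤ v) : u + (r : Rmax) ≤ v + (r : Rmax) :=
  add_le_add_left h _

lemma Rmax.of_le_add_eps {u v : Rmax} {ε : ℝ} (h : u ≤ v + (ε : Rmax)) :
    u + ((-ε : ℝ) : Rmax) ≤ v := by
  have := Rmax.add_le_right (-ε) h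
  rwa [Rmax.addc v ε (-ε), add_neg_cancel, WithBot.coe_zero, add_zero] at this

/-- upper bound: `dotp c x ≤ dotp c g + ε` when `x ≤ g + ε` coordinatewise. -/
lemma dotp_upper {d : ℕ} (c : Fin d → Rmax) (x G : Fin d → Rmax) (ε : ℝ)
    (h : ∀ i, x i ≤ G i + (ε : Rmax)) : dotp c x ≤ dotp c G + (ε : Rmax) := by
  refine Finset.sup_le fun i _ => ?_
  calc c i + x i ≤ c i + (G i + (ε : Rmax)) := add_le_add_right (h i) _
    _ = (c i + G i) + (ε : Rmax) := by rw [add_assoc]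
    _ ≤ dotp c G + (ε : Rmax) :=
      Rmax.add_le_right _ (Finset.le_sup (f := fun i => c i + G i) (Finset.mem_univ i))

/-- The key computation: near `g`, `dotp c x = m + sup_{argmax} (x - g)`. -/
lemma dotp_near {d : ℕ} (g' x' : Fin d → ℝ) (ε : ℝ) (hε : 0 < ε)
    (c : Fin d → Rmax) (x : Fin d → Rmax) (hx : ∀ i, x i = ((x' i : ℝ) : Rmax))
    (hlo : ∀ i, g' i - ε < x' i) (hhi : ∀ i, x' i < g' i + ε) (m : ℝ)
    (hm : dotp c (fun i => ((g' i : ℝ) : Rmax)) = ((m : ℝ) : Rmax))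
    (margin : ∀ i, c i + ((g' i : ℝ) : Rmax) < ((m : ℝ) : Rmax) →
      c i + ((g' i : ℝ) : Rmax) + ((2 * ε : ℝ) : Rmax) < ((m : ℝ) : Rmax)) :
    dotp c x = ((m : ℝ) : Rmax) +
      (argmaxSet c (fun i => ((g' i : ℝ) : Rmax))).sup
        (fun i => x i + ((-g' i : ℝ) : Rmax)) := by
  set G : Fin d → Rmax := fun i => ((g' i : ℝ) : Rmax) with hG
  set y : Fin d → Rmax := fun i => x i + ((-g' i : ℝ) : Rmax) with hy
  have hyc : ∀ i, y i = ((x' i - g' i : ℝ) : Rmax) := by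
    intro i; simp only [hy, hx i, ← WithBot.coe_add]; ring_nf
  -- univ nonempty
  have hne : (Finset.univ : Finset (Fin d)).Nonempty := by
    rcases (Finset.univ : Finset (Fin d)).eq_empty_or_nonempty with h | h
    · exfalso
      have : dotp c G = ⊥ := by rw [dotp, h]; simp
      rw [hm] at this; exact WithBot.coe_ne_bot this
    · exact h
  obtain ⟨i0, -, hi0⟩ := Finset.exists_mem_eq_sup Finset.univ hne (fun i => c i + G i)
  have hi0m : c i0 + G i0 = ((m : ℝ) : Rmax) := by rw [← hi0]; exact hm
  have hi0mem : i0 ∈ argmaxSet c G := by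
    simp only [argmaxSet, Finset.mem_filter, Finset.mem_univ, true_and]
    rw [hi0m, hm]
  have hargne : (argmaxSet c G).Nonempty := ⟨i0, hi0mem⟩
  -- for i in argmax: c i + x i = m + y i
  have hkey : ∀ i ∈ argmaxSet c G, c i + x i = ((m : ℝ) : Rmax) + y i := by
    intro i hi
    have him : c i + G i = ((m : ℝ) : Rmax) := by
      simpa [argmaxSet, hm] using hi
    have : c i + x i = c i + G i + ((x' i - g' i : ℝ) : Rmax) := by
      rw [Rmax.addc (c i) (g' i) (x' i - g' i)]
      congr 1
      rw [hx i]; norm_num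
    rw [this, him, hyc i]
  apply le_antisymm
  · refine Finset.sup_le fun i _ => ?_
    by_cases hi : i ∈ argmaxSet c G
    · rw [hkey i hi]
      exact add_le_add_right (Finset.le_sup hi) _
    · -- i not in argmax
      have hlt : c i + G i < ((m : ℝ) : Rmax) := by
        have hle : c i + G i ≤ dotp c G := Finset.le_sup (f := fun i => c i + G i)
          (Finset.mem_univ i)
        rw [hm] at hle
        rcases lt_or_eq_of_le hle with h | h
        · exact h
        · exact absurd (by simp [argmaxSet, hm, h]) hi
      have hmar := margin i hlt
      have h1 : c i + x i ≤ c i + G i + (ε : Rmax) := by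
        have : x i ≤ G i + (ε : Rmax) := by
          rw [hx i, hG]; simp only [← WithBot.coe_add, WithBot.coe_le_coe]
          exact (hhi i).le
        calc c i + x i ≤ c i + (G i + (ε : Rmax)) := add_le_add_right this _
          _ = c i + G i + (ε : Rmax) := (add_assoc _ _ _).symm
      have h2 : c i + G i + (ε : Rmax) ≤ ((m : ℝ) : Rmax) + ((-ε : ℝ) : Rmax) := by
        have := Rmax.add_le_right (-ε) hmar.le
        rwa [Rmax.addc (c i + G i) (2 * ε) (-ε), show 2 * ε + -ε = ε by ring] at this
      have h3 : ((m : ℝ) : Rmax) + ((-ε : ℝ) : Rmax) ≤ ((m : ℝ) : Rmax) + y i0 := by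
        apply add_le_add_right
        rw [hyc i0, WithBot.coe_le_coe]
        have := hlo i0; linarith
      exact h1.trans (h2.trans (h3.trans (add_le_add_right (Finset.le_sup hi0mem) _)))
  · obtain ⟨i1, hi1mem, hi1⟩ := Finset.exists_mem_eq_sup _ hargne y
    rw [hi1, ← hkey i1 hi1mem]
    exact Finset.le_sup (f := fun i => c i + x i) (Finset.mem_univ i1)


/-- Prop.: the tangent cone `T(g,C)` describes `C` locally around `g` (with
`supp g = {1,…,d}`, i.e. all coordinates of `g` finite): there is a
neighborhood `N` of `g` such that for `x ∈ N`, `x ∈ C` iff `x - g ∈ T(g,C)`. -/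
theorem stmt5 {d n : ℕ} (A B : Fin n → Fin d → Rmax) (g' : Fin d → ℝ)
    (hg : (fun i => ((g' i : ℝ) : Rmax)) ∈ coneOf A B) :
    ∃ N ∈ nhds (fun i => ((g' i : ℝ) : Rmax)), ∀ x ∈ N,
      x ∈ coneOf A B ↔
        (fun i => x i + ((-g' i : ℝ) : Rmax)) ∈
          tangentCone A B (fun i => ((g' i : ℝ) : Rmax)) := by
  set G : Fin d → Rmax := fun i => ((g' i : ℝ) : Rmax) with hG
  -- the finite set of relevant pairs
  set P : Finset (Rmax × Rmax) :=
    ((Finset.univ : Finset (Fin n × Fin d × Bool)).image fun kib =>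
       ((if kib.2.2 then A kib.1 else B kib.1) kib.2.1 + G kib.2.1,
        dotp (if kib.2.2 then A kib.1 else B kib.1) G))
    ∪ ((Finset.univ : Finset (Fin n)).image fun k => (dotp (A k) G, dotp (B k) G))
    with hP
  set vals : Finset ℝ := insert 1 (P.image fun p =>
    if p.1 < p.2 ∧ p.1 ≠ ⊥ then WithBot.unbotD 0 p.2 - WithBot.unbotD 0 p.1 else 1) with hvals
  have hvalsne : vals.Nonempty := ⟨1, Finset.mem_insert_self _ _⟩
  set ε : ℝ := vals.min' hvalsne / 3 with hε
  have hvalspos : ∀ r ∈ vals, 0 < r := by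
    intro r hr
    rcases Finset.mem_insert.mp hr with h | h
    · rw [h]; norm_num
    · obtain ⟨p, -, hp⟩ := Finset.mem_image.mp h
      by_cases hc : p.1 < p.2 ∧ p.1 ≠ ⊥
      · rw [if_pos hc] at hp
        obtain ⟨a, ha⟩ := WithBot.ne_bot_iff_exists.mp hc.2
        have hp2 : p.2 ≠ ⊥ := fun h2 => by
          rw [h2] at hc; exact not_lt_bot hc.1
        obtain ⟨b, hb⟩ := WithBot.ne_bot_iff_exists.mp hp2
        have : a < b := by
          rw [← WithBot.coe_lt_coe, ha, hb]; exact hc.1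
        rw [← hp, ← ha, ← hb]; simp [WithBot.unbotD_coe]; linarith
      · rw [if_neg hc] at hp; rw [← hp]; norm_num
  have hεpos : 0 < ε := by
    have := hvalspos _ (vals.min'_mem hvalsne)
    rw [hε]; linarith
  -- margin property
  have hmargin : ∀ p ∈ P, p.1 < p.2 → p.1 + ((2 * ε : ℝ) : Rmax) < p.2 := by
    intro p hp hlt
    by_cases hb : p.1 = ⊥
    · rw [hb, WithBot.bot_add]
      exact hb ▸ hlt
    · obtain ⟨a, ha⟩ := WithBot.ne_bot_iff_exists.mp hb
      have hp2 : p.2 ≠ ⊥ := fun h2 => by rw [h2] at hlt; exact not_lt_bot hlt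
      obtain ⟨b, hb2⟩ := WithBot.ne_bot_iff_exists.mp hp2
      have hab : a < b := by rw [← WithBot.coe_lt_coe, ha, hb2]; exact hlt
      have hmem : b - a ∈ vals := by
        refine Finset.mem_insert_of_mem (Finset.mem_image.mpr ⟨p, hp, ?_⟩)
        rw [if_pos ⟨hlt, hb⟩, ← ha, ← hb2]; simp [WithBot.unbotD_coe]
      have h3 : vals.min' hvalsne ≤ b - a := Finset.min'_le _ _ hmem
      rw [← ha, ← hb2, ← WithBot.coe_add, WithBot.coe_lt_coe]
      have : 3 * ε ≤ b - a := by rw [hε]; linarith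
      linarith
  -- the neighborhood
  refine ⟨Set.univ.pi fun i => Set.Ioo ((g' i - ε : ℝ) : Rmax) ((g' i + ε : ℝ) : Rmax),
    set_pi_mem_nhds Set.finite_univ fun i _ => Ioo_mem_nhds ?_ ?_, ?_⟩
  · exact WithBot.coe_lt_coe.mpr (by linarith)
  · exact WithBot.coe_lt_coe.mpr (by linarith)
  intro x hxN
  have hxi : ∀ i, ∃ r : ℝ, x i = ((r : ℝ) : Rmax) := by
    intro i
    have h1 := (hxN i (Set.mem_univ i)).1
    have hb : x i ≠ ⊥ := fun hb => by rw [hb] at h1; exact absurd h1 (by simp)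
    obtain ⟨r, hr⟩ := WithBot.ne_bot_iff_exists.mp hb
    exact ⟨r, hr.symm⟩
  choose x' hx using hxi
  have hlo : ∀ i, g' i - ε < x' i := fun i => by
    have := (hxN i (Set.mem_univ i)).1; rw [hx i, WithBot.coe_lt_coe] at this; exact this
  have hhi : ∀ i, x' i < g' i + ε := fun i => by
    have := (hxN i (Set.mem_univ i)).2; rw [hx i, WithBot.coe_lt_coe] at this; exact this
  -- coordinatewise bounds as Rmax inequalities
  have hxle : ∀ i, x i ≤ G i + (ε : Rmax) := fun i => by
    rw [hx i, hG]; simp only [← WithBot.coe_add, WithBot.coe_le_coe]; exact (hhi i).le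
  have hgle : ∀ i, G i ≤ x i + (ε : Rmax) := fun i => by
    rw [hx i, hG]; simp only [← WithBot.coe_add, WithBot.coe_le_coe]
    have := hlo i; linarith
  -- row-pair membership in P
  have hProw : ∀ k, (dotp (A k) G, dotp (B k) G) ∈ P :=
    fun k => Finset.mem_union_right _ (Finset.mem_image.mpr ⟨k, Finset.mem_univ k, rfl⟩)
  have hPentryA : ∀ k i, (A k i + G i, dotp (A k) G) ∈ P := fun k i =>
    Finset.mem_union_left _ (Finset.mem_image.mpr ⟨(k, i, true), Finset.mem_univ _, by simp⟩)
  have hPentryB : ∀ k i, (B k i + G i, dotp (B k) G) ∈ P := fun k i =>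
    Finset.mem_union_left _ (Finset.mem_image.mpr ⟨(k, i, false), Finset.mem_univ _, by simp⟩)
  constructor
  · intro hxC k hk
    rcases eq_or_ne (dotp (A k) G) ⊥ with hbot | hnb
    · -- both dotps are ⊥ : argmax sets are univ
      have hbotB : dotp (B k) G = ⊥ := by rw [← hk]; exact hbot
      have : argmaxSet (A k) G = argmaxSet (B k) G := by
        have h1 : ∀ i, A k i + G i = ⊥ :=
          fun i => le_bot_iff.mp (hbot ▸ Finset.le_sup (f := fun i => A k i + G i)
            (Finset.mem_univ i))
        have h2 : ∀ i, B k i + G i = ⊥ :=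
          fun i => le_bot_iff.mp (hbotB ▸ Finset.le_sup (f := fun i => B k i + G i)
            (Finset.mem_univ i))
        simp [argmaxSet, h1, h2, hbot, hbotB]
      rw [this]
    · obtain ⟨m, hm⟩ := WithBot.ne_bot_iff_exists.mp hnb
      have hmB : dotp (B k) G = ((m : ℝ) : Rmax) := by rw [← hk, ← hm]
      have hmA : dotp (A k) G = ((m : ℝ) : Rmax) := hm.symm
      have eA := dotp_near g' x' ε hεpos (A k) x hx hlo hhi m hmA
        (fun i hlt => hmA ▸ hmargin _ (hPentryA k i) (hmA ▸ hlt))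
      have eB := dotp_near g' x' ε hεpos (B k) x hx hlo hhi m hmB
        (fun i hlt => hmB ▸ hmargin _ (hPentryB k i) (hmB ▸ hlt))
      have := hxC k
      rw [eA, eB] at this
      exact (WithBot.add_le_add_iff_left (by exact WithBot.coe_ne_bot)).mp this
  · intro hT k
    rcases lt_trichotomy (dotp (A k) G) (dotp (B k) G) with hlt | heq | hgt
    · -- strict row: automatic
      have h1 : dotp (A k) x ≤ dotp (A k) G + (ε : Rmax) := dotp_upper _ _ _ _ hxle
      have h2 : dotp (B k) G ≤ dotp (B k) x + (ε : Rmax) := by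
        refine Finset.sup_le fun i _ => ?_
        calc B k i + G i ≤ B k i + (x i + (ε : Rmax)) := add_le_add_right (hgle i) _
          _ = (B k i + x i) + (ε : Rmax) := (add_assoc _ _ _).symm
          _ ≤ dotp (B k) x + (ε : Rmax) :=
            Rmax.add_le_right _ (Finset.le_sup (f := fun i => B k i + x i) (Finset.mem_univ i))
      have h3 := hmargin _ (hProw k) hlt
      have h4 : dotp (A k) G + (ε : Rmax) ≤ dotp (B k) G + ((-ε : ℝ) : Rmax) := by
        have := Rmax.add_le_right (-ε) h3.le
        rwa [Rmax.addc (dotp (A k) G) (2 * ε) (-ε), show 2 * ε + -ε = ε by ring] at this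
      have h5 : dotp (B k) G + ((-ε : ℝ) : Rmax) ≤ dotp (B k) x := Rmax.of_le_add_eps h2
      exact h1.trans (h4.trans h5)
    · rcases eq_or_ne (dotp (A k) G) ⊥ with hbot | hnb
      · -- all A-entries ⊥, so dotp (A k) x = ⊥
        have h1 : ∀ i, A k i + G i = ⊥ :=
          fun i => le_bot_iff.mp (hbot ▸ Finset.le_sup (f := fun i => A k i + G i)
            (Finset.mem_univ i))
        have h2 : ∀ i, A k i = ⊥ := by
          intro i
          rcases WithBot.add_eq_bot.mp (h1 i) with h | h
          · exact h
          · exact absurd h (by exact WithBot.coe_ne_bot)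
        have : dotp (A k) x = ⊥ := by
          rw [dotp]; refine le_bot_iff.mp (Finset.sup_le fun i _ => ?_)
          rw [h2 i, WithBot.bot_add]
        rw [this]; exact bot_le
      · obtain ⟨m, hm⟩ := WithBot.ne_bot_iff_exists.mp hnb
        have hmA : dotp (A k) G = ((m : ℝ) : Rmax) := hm.symm
        have hmB : dotp (B k) G = ((m : ℝ) : Rmax) := by rw [← heq, ← hm]
        have eA := dotp_near g' x' ε hεpos (A k) x hx hlo hhi m hmA
          (fun i hlt => hmA ▸ hmargin _ (hPentryA k i) (hmA ▸ hlt))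
        have eB := dotp_near g' x' ε hεpos (B k) x hx hlo hhi m hmB
          (fun i hlt => hmB ▸ hmargin _ (hPentryB k i) (hmB ▸ hlt))
        rw [eA, eB]
        exact add_le_add_right (hT k heq) _
    · exact absurd (hg k) (not_le.mpr hgt)
end
end

section
/- Let C = {x ∈ R_max^d | A·x ≤ B·x} be a tropical cone and g ∈ C with all coordinates finite. Then g is extreme of type t in C if and only if the all-zeros vector 𝟙 is extreme of type t in the tangent cone T(g,C). -/
open scoped Classical

noncomputable section

-- basic Rmax arithmetic
lemma rmax_add_sup (c a b : Rmax) : c + (a ⊔ b) = (c + a) ⊔ (c + b) := by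
  rcases le_total a b with h | h
  · rw [sup_eq_right.2 h, sup_eq_right.2 (add_le_add_right h c)]
  · rw [sup_eq_left.2 h, sup_eq_left.2 (add_le_add_right h c)]

lemma rmax_add_finsetSup {ι : Type*} (s : Finset ι) (f : ι → Rmax) (c : Rmax) :
    s.sup (fun i => c + f i) = c + s.sup f := by
  induction s using Finset.cons_induction with
  | empty => simp
  | cons a s ha ih => rw [Finset.sup_cons, Finset.sup_cons, ih, rmax_add_sup]

lemma rmax_coe_add_le_cancel (r : ℝ) {a b : Rmax} (h : (r:Rmax) + a ≤ (r:Rmax) + b) : a ≤ b := by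
  induction a using WithBot.recBotCoe with
  | bot => exact bot_le
  | coe a =>
    induction b using WithBot.recBotCoe with
    | bot => simp only [WithBot.add_bot, ← WithBot.coe_add, le_bot_iff, WithBot.coe_ne_bot] at h
    | coe b =>
      rw [← WithBot.coe_add, ← WithBot.coe_add, WithBot.coe_le_coe] at h
      exact WithBot.coe_le_coe.2 (by linarith)

lemma rmax_coe_add_cancel (r : ℝ) {a b : Rmax} (h : (r:Rmax) + a = (r:Rmax) + b) : a = b :=
  le_antisymm (rmax_coe_add_le_cancel r h.le) (rmax_coe_add_le_cancel r h.ge)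

lemma rmax_add_neg_cancel (a : Rmax) (r : ℝ) : a + (r:Rmax) + ((-r : ℝ):Rmax) = a := by
  rw [add_assoc, ← WithBot.coe_add]
  norm_num

lemma rmax_neg_add_cancel (a : Rmax) (r : ℝ) : a + ((-r : ℝ):Rmax) + (r:Rmax) = a := by
  rw [add_assoc, ← WithBot.coe_add]
  norm_num

lemma term_le_dotp {d : ℕ} (c g : Fin d → Rmax) (i : Fin d) : c i + g i ≤ dotp c g := by
  unfold dotp; exact Finset.le_sup (f := fun j => c j + g j) (Finset.mem_univ i)

def mgap {d : ℕ} (c g : Fin d → Rmax) : Rmax :=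
  (Finset.univ.filter fun i => ¬ (c i + g i = dotp c g)).sup fun i => c i + g i

lemma mgap_lt {d : ℕ} {c g : Fin d → Rmax} (h : dotp c g ≠ ⊥) : mgap c g < dotp c g := by
  refine (Finset.sup_lt_iff (bot_lt_iff_ne_bot.2 h)).2 fun i hi => ?_
  exact lt_of_le_of_ne (term_le_dotp c g i) (Finset.mem_filter.1 hi).2

lemma mgap_bot {d : ℕ} {c g : Fin d → Rmax} (h : dotp c g = ⊥) : mgap c g = ⊥ :=
  le_bot_iff.1 (h ▸ Finset.sup_le fun i _ => term_le_dotp c g i)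

lemma argmax_nonempty {d : ℕ} {c g : Fin d → Rmax} (h : dotp c g ≠ ⊥) :
    (argmaxSet c g).Nonempty := by
  have hu : (Finset.univ : Finset (Fin d)).Nonempty := by
    by_contra h'
    rw [Finset.not_nonempty_iff_eq_empty] at h'
    exact h (by simp [dotp, h'])
  obtain ⟨i, _, hi⟩ := Finset.exists_mem_eq_sup _ hu fun i => c i + g i
  exact ⟨i, Finset.mem_filter.2 ⟨Finset.mem_univ i, hi.symm⟩⟩

lemma argmax_eq_univ {d : ℕ} {c g : Fin d → Rmax} (h : dotp c g = ⊥) :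
    argmaxSet c g = Finset.univ := by
  refine Finset.eq_univ_iff_forall.2 fun i => Finset.mem_filter.2 ⟨Finset.mem_univ i, ?_⟩
  have := term_le_dotp c g i
  rw [h] at this ⊢
  exact le_bot_iff.1 this

lemma dotp_lower {d : ℕ} (c g x : Fin d → Rmax) :
    dotp c g + (argmaxSet c g).sup x ≤ dotp c (fun i => g i + x i) := by
  rw [← rmax_add_finsetSup]
  refine Finset.sup_le fun i hi => ?_
  have h1 : c i + g i = dotp c g := (Finset.mem_filter.1 hi).2
  calc dotp c g + x i = c i + (g i + x i) := by rw [← h1, add_assoc]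
    _ ≤ _ := Finset.le_sup (f := fun i => c i + (g i + x i)) (Finset.mem_univ i)

lemma dotp_upper_s6 {d : ℕ} (c g x : Fin d → Rmax) (hx : ∀ i, x i ≤ 0) :
    dotp c (fun i => g i + x i) ≤ (dotp c g + (argmaxSet c g).sup x) ⊔ mgap c g := by
  refine Finset.sup_le fun i _ => ?_
  by_cases h : c i + g i = dotp c g
  · refine le_sup_of_le_left ?_
    rw [← add_assoc, h]
    exact add_le_add_right (Finset.le_sup (Finset.mem_filter.2 ⟨Finset.mem_univ i, h⟩)) _
  · refine le_sup_of_le_right ?_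
    calc c i + (g i + x i) ≤ c i + (g i + 0) := add_le_add_right (add_le_add_right (hx i) _) _
      _ = c i + g i := by rw [add_zero]
      _ ≤ mgap c g := Finset.le_sup (f := fun i => c i + g i)
            (Finset.mem_filter.2 ⟨Finset.mem_univ i, h⟩)

lemma zero_mem_tangent {d n : ℕ} (A B : Fin n → Fin d → Rmax) (g : Fin d → Rmax) :
    (fun _ => (0 : Rmax)) ∈ tangentCone A B g := by
  intro k hk
  by_cases hb : dotp (B k) g = ⊥
  · rw [argmax_eq_univ (hk.trans hb), argmax_eq_univ hb]
  · obtain ⟨j, hj⟩ := argmax_nonempty hb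
    exact Finset.sup_le fun i _ => Finset.le_sup (f := fun _ => (0:Rmax)) hj

lemma tangent_sup_const {d n : ℕ} {A B : Fin n → Fin d → Rmax} {g : Fin d → Rmax}
    {x : Fin d → Rmax} (hx : x ∈ tangentCone A B g) (c : Rmax) :
    (fun i => x i ⊔ c) ∈ tangentCone A B g := by
  intro k hk
  have h := hx k hk
  by_cases hb : dotp (B k) g = ⊥
  · rw [argmax_eq_univ (hk.trans hb), argmax_eq_univ hb]
  · obtain ⟨j, hj⟩ := argmax_nonempty hb
    refine Finset.sup_le fun i hi => sup_le ?_ ?_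
    · refine le_trans (le_trans (Finset.le_sup hi) h) ?_
      exact Finset.sup_le fun j' hj' =>
        le_trans le_sup_left (Finset.le_sup (f := fun i => x i ⊔ c) hj')
    · exact le_trans le_sup_right (Finset.le_sup (f := fun i => x i ⊔ c) hj)

def GoodEps {d n : ℕ} (A B : Fin n → Fin d → Rmax) (g : Fin d → Rmax) (ε : ℝ) : Prop :=
  ∀ k, (dotp (A k) g = dotp (B k) g →
          mgap (A k) g + (ε:Rmax) ≤ dotp (A k) g ∧ mgap (B k) g + (ε:Rmax) ≤ dotp (B k) g)
     ∧ (dotp (A k) g ≠ dotp (B k) g → dotp (A k) g + (ε:Rmax) ≤ dotp (B k) g)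

lemma ev_add_le {a b : Rmax} (h : a = ⊥ ∨ a < b) :
    ∀ᶠ ε : ℝ in nhdsWithin 0 (Set.Ioi 0), a + (ε:Rmax) ≤ b := by
  rcases h with h | h
  · exact Filter.Eventually.of_forall fun ε => by simp [h]
  · induction a using WithBot.recBotCoe with
    | bot => exact Filter.Eventually.of_forall fun ε => by simp
    | coe a =>
      induction b using WithBot.recBotCoe with
      | bot => exact absurd h (by simp)
      | coe b =>
        have hab : a < b := WithBot.coe_lt_coe.1 h
        have hm : Set.Ioo (0:ℝ) (b - a) ∈ nhdsWithin (0:ℝ) (Set.Ioi 0) :=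
          Ioo_mem_nhdsGT_of_mem ⟨le_refl 0, by linarith⟩
        filter_upwards [hm] with ε hε
        rw [← WithBot.coe_add]
        exact WithBot.coe_le_coe.2 (by have := hε.2; linarith)

lemma exists_goodEps {d n : ℕ} (A B : Fin n → Fin d → Rmax) (g : Fin d → Rmax)
    (hg : g ∈ coneOf A B) : ∃ ε : ℝ, 0 < ε ∧ GoodEps A B g ε := by
  have H : ∀ k, ∀ᶠ ε : ℝ in nhdsWithin 0 (Set.Ioi 0),
      (dotp (A k) g = dotp (B k) g →
          mgap (A k) g + (ε:Rmax) ≤ dotp (A k) g ∧ mgap (B k) g + (ε:Rmax) ≤ dotp (B k) g)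
     ∧ (dotp (A k) g ≠ dotp (B k) g → dotp (A k) g + (ε:Rmax) ≤ dotp (B k) g) := by
    intro k
    by_cases hk : dotp (A k) g = dotp (B k) g
    · have h1 : mgap (A k) g = ⊥ ∨ mgap (A k) g < dotp (A k) g := by
        by_cases hb : dotp (A k) g = ⊥
        · exact Or.inl (mgap_bot hb)
        · exact Or.inr (mgap_lt hb)
      have h2 : mgap (B k) g = ⊥ ∨ mgap (B k) g < dotp (B k) g := by
        by_cases hb : dotp (B k) g = ⊥
        · exact Or.inl (mgap_bot hb)
        · exact Or.inr (mgap_lt hb)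
      filter_upwards [ev_add_le h1, ev_add_le h2] with ε e1 e2
      exact ⟨fun _ => ⟨e1, e2⟩, fun hn => absurd hk hn⟩
    · filter_upwards [ev_add_le (Or.inr (lt_of_le_of_ne (hg k) hk))] with ε e
      exact ⟨fun h => absurd h hk, fun _ => e⟩
  obtain ⟨ε, h1, h2⟩ := ((Filter.eventually_all.2 H).and eventually_mem_nhdsWithin).exists
  exact ⟨ε, h2, h1⟩

lemma mem_cone_of_tangent {d n : ℕ} (A B : Fin n → Fin d → Rmax) (G : Fin d → Rmax)
    (hg : G ∈ coneOf A B) {ε : ℝ} (hQ : GoodEps A B G ε)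
    {x : Fin d → Rmax} (hx : x ∈ tangentCone A B G)
    (hx0 : ∀ i, x i ≤ 0) (hxε : ∀ i, (((-ε : ℝ)) : Rmax) ≤ x i) :
    (fun i => G i + x i) ∈ coneOf A B := by
  intro k
  by_cases hk : dotp (A k) G = dotp (B k) G
  · by_cases hb : dotp (B k) G = ⊥
    · refine le_trans (Finset.sup_le fun i _ => ?_) bot_le
      have hbot : A k i + G i = ⊥ := le_bot_iff.1 ((hk.trans hb) ▸ term_le_dotp (A k) G i)
      calc A k i + (G i + x i) = (A k i + G i) + x i := (add_assoc _ _ _).symm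
        _ = ⊥ := by rw [hbot, WithBot.bot_add]
        _ ≤ ⊥ := le_refl _
    · obtain ⟨j, hj⟩ := argmax_nonempty hb
      have hT := hx k hk
      have hSB : (((-ε : ℝ)) : Rmax) ≤ (argmaxSet (B k) G).sup x :=
        le_trans (hxε j) (Finset.le_sup hj)
      have hm : mgap (A k) G ≤ dotp (B k) G + (((-ε : ℝ)) : Rmax) := by
        have h1 := ((hQ k).1 hk).1
        calc mgap (A k) G = mgap (A k) G + (ε:Rmax) + (((-ε : ℝ)) : Rmax) :=
              (rmax_add_neg_cancel _ ε).symm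
          _ ≤ dotp (A k) G + (((-ε : ℝ)) : Rmax) := add_le_add_left h1 _
          _ = dotp (B k) G + (((-ε : ℝ)) : Rmax) := by rw [hk]
      calc dotp (A k) (fun i => G i + x i)
          ≤ (dotp (A k) G + (argmaxSet (A k) G).sup x) ⊔ mgap (A k) G :=
            dotp_upper_s6 (A k) G x hx0
        _ ≤ dotp (B k) G + (argmaxSet (B k) G).sup x := by
            refine sup_le ?_ (hm.trans (add_le_add_right hSB _))
            rw [hk]; exact add_le_add_right hT _
        _ ≤ dotp (B k) (fun i => G i + x i) := dotp_lower (B k) G x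
  · have hlt : dotp (A k) G < dotp (B k) G := lt_of_le_of_ne (hg k) hk
    have hb : dotp (B k) G ≠ ⊥ := ne_bot_of_gt hlt
    obtain ⟨j, hj⟩ := argmax_nonempty hb
    have h1 : dotp (A k) (fun i => G i + x i) ≤ dotp (A k) G := by
      refine Finset.sup_le fun i _ => ?_
      calc A k i + (G i + x i) ≤ A k i + (G i + 0) :=
            add_le_add_right (add_le_add_right (hx0 i) _) _
        _ = A k i + G i := by rw [add_zero]
        _ ≤ dotp (A k) G := term_le_dotp (A k) G i
    have h2 : dotp (A k) G ≤ dotp (B k) G + (((-ε : ℝ)) : Rmax) := by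
      have := (hQ k).2 hk
      calc dotp (A k) G = dotp (A k) G + (ε:Rmax) + (((-ε : ℝ)) : Rmax) :=
            (rmax_add_neg_cancel _ ε).symm
        _ ≤ dotp (B k) G + (((-ε : ℝ)) : Rmax) := add_le_add_left this _
    have h3 : dotp (B k) G + (((-ε : ℝ)) : Rmax) ≤ dotp (B k) (fun i => G i + x i) := by
      have hj2 : B k j + G j = dotp (B k) G := (Finset.mem_filter.1 hj).2
      calc dotp (B k) G + (((-ε : ℝ)) : Rmax) ≤ dotp (B k) G + x j := add_le_add_right (hxε j) _
        _ = B k j + (G j + x j) := by rw [← hj2, add_assoc]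
        _ ≤ _ := Finset.le_sup (f := fun i => B k i + (G i + x i)) (Finset.mem_univ j)
    exact h1.trans (h2.trans h3)

lemma mem_tangent_of_cone {d n : ℕ} (A B : Fin n → Fin d → Rmax) (g' : Fin d → ℝ)
    {ε : ℝ} (hQ : GoodEps A B (fun i => ((g' i : ℝ) : Rmax)) ε)
    {y : Fin d → Rmax} (hy : y ∈ coneOf A B) (hyg : ∀ i, y i ≤ ((g' i : ℝ) : Rmax)) :
    (fun i => (y i + (((-(g' i) : ℝ)) : Rmax)) ⊔ (((-ε : ℝ)) : Rmax))
      ∈ tangentCone A B (fun i => ((g' i : ℝ) : Rmax)) := by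
  set G : Fin d → Rmax := fun i => ((g' i : ℝ) : Rmax) with hG
  set x : Fin d → Rmax := fun i => y i + (((-(g' i) : ℝ)) : Rmax) with hxdef
  have hyx : ∀ i, y i = G i + x i := by
    intro i
    calc y i = y i + (((-(g' i) : ℝ)) : Rmax) + ((g' i : ℝ) : Rmax) :=
          (rmax_neg_add_cancel _ _).symm
      _ = G i + x i := by rw [add_comm]
  have hx0 : ∀ i, x i ≤ 0 := by
    intro i
    calc y i + (((-(g' i) : ℝ)) : Rmax) ≤ ((g' i : ℝ) : Rmax) + (((-(g' i) : ℝ)) : Rmax) :=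
          add_le_add_left (hyg i) _
      _ = 0 := by rw [← WithBot.coe_add]; norm_num
  intro k hk
  by_cases hb : dotp (B k) G = ⊥
  · rw [argmax_eq_univ (hk.trans hb), argmax_eq_univ hb]
  · have hAne : dotp (A k) G ≠ ⊥ := by rw [hk]; exact hb
    obtain ⟨jB, hjB⟩ := argmax_nonempty hb
    refine Finset.sup_le fun i hi => ?_
    refine sup_le ?_
      (le_trans le_sup_right (Finset.le_sup (f := fun i => x i ⊔ (((-ε : ℝ)) : Rmax)) hjB))
    -- goal : x i ≤ supB (x ⊔ -ε)
    have hmB : mgap (B k) G ≤ dotp (B k) G + (((-ε : ℝ)) : Rmax) := by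
      have h1 := ((hQ k).1 hk).2
      calc mgap (B k) G = mgap (B k) G + (ε:Rmax) + (((-ε : ℝ)) : Rmax) :=
            (rmax_add_neg_cancel _ ε).symm
        _ ≤ dotp (B k) G + (((-ε : ℝ)) : Rmax) := add_le_add_left h1 _
    have key : dotp (A k) G + x i
        ≤ dotp (A k) G + ((argmaxSet (B k) G).sup x ⊔ (((-ε : ℝ)) : Rmax)) := by
      have e1 : dotp (A k) G + x i = A k i + y i := by
        have h1 : A k i + G i = dotp (A k) G := (Finset.mem_filter.1 hi).2
        rw [← h1, add_assoc, ← hyx i]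
      have hdy : dotp (B k) y = dotp (B k) (fun i => G i + x i) := by
        unfold dotp; exact Finset.sup_congr rfl fun i _ => congrArg (fun z => B k i + z) (hyx i)
      rw [e1, rmax_add_sup, hk]
      calc A k i + y i ≤ dotp (A k) y := term_le_dotp (A k) y i
        _ ≤ dotp (B k) y := hy k
        _ = dotp (B k) (fun i => G i + x i) := hdy
        _ ≤ (dotp (B k) G + (argmaxSet (B k) G).sup x) ⊔ mgap (B k) G :=
            dotp_upper_s6 (B k) G x hx0
        _ ≤ (dotp (B k) G + (argmaxSet (B k) G).sup x)
              ⊔ (dotp (B k) G + (((-ε : ℝ)) : Rmax)) := sup_le_sup_left hmB _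
    obtain ⟨v, hv⟩ := WithBot.ne_bot_iff_exists.1 hAne
    rw [← hv] at key
    have hxle := rmax_coe_add_le_cancel v key
    show x i ≤ (argmaxSet (B k) G).sup fun i => x i ⊔ (((-ε : ℝ)) : Rmax)
    refine le_trans hxle (sup_le ?_ ?_)
    · exact Finset.sup_le fun j' hj' =>
        le_trans le_sup_left (Finset.le_sup (f := fun i => x i ⊔ (((-ε : ℝ)) : Rmax)) hj')
    · exact le_trans le_sup_right (Finset.le_sup (f := fun i => x i ⊔ (((-ε : ℝ)) : Rmax)) hjB)


/-- Prop.: `g` (all coordinates finite) is extreme of type `t` in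
`C = {x | A·x ≤ B·x}` iff the all-zeros vector is extreme of type `t`
in the tangent cone `T(g,C)`. -/
theorem stmt6 {d n : ℕ} (A B : Fin n → Fin d → Rmax) (g' : Fin d → ℝ) (t : Fin d)
    (hg : (fun i => ((g' i : ℝ) : Rmax)) ∈ coneOf A B) :
    ExtremeType (coneOf A B) (fun i => ((g' i : ℝ) : Rmax)) t ↔
      ExtremeType (tangentCone A B (fun i => ((g' i : ℝ) : Rmax)))
        (fun _ => (0 : Rmax)) t :=  by
  set G : Fin d → Rmax := fun i => ((g' i : ℝ) : Rmax) with hGdef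
  constructor
  · rintro ⟨-, hmin⟩
    refine ⟨zero_mem_tangent A B G, ?_⟩
    intro x hxT hxle hxt
    obtain ⟨ε, hεpos, hQ⟩ := exists_goodEps A B G hg
    have hneg : (((-ε : ℝ)) : Rmax) ≤ 0 := by
      exact_mod_cast (by linarith : (-ε : ℝ) ≤ 0)
    set x' : Fin d → Rmax := fun i => x i ⊔ (((-ε : ℝ)) : Rmax) with hx'
    have hx'T : x' ∈ tangentCone A B G := tangent_sup_const hxT _
    have hx'0 : ∀ i, x' i ≤ 0 := fun i => sup_le (hxle i) hneg
    have hx'ε : ∀ i, (((-ε : ℝ)) : Rmax) ≤ x' i := fun i => le_sup_right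
    have hyC := mem_cone_of_tangent A B G hg hQ hx'T hx'0 hx'ε
    have hyle : (fun i => G i + x' i) ≤ G := by
      intro i
      calc G i + x' i ≤ G i + 0 := add_le_add_right (hx'0 i) _
        _ = G i := add_zero _
    have hxt0 : x t = 0 := hxt
    have hyt : G t + x' t = G t := by
      have : x' t = 0 := by
        show x t ⊔ _ = 0
        rw [hxt0]
        exact sup_eq_left.2 hneg
      rw [this, add_zero]
    have heq := hmin _ hyC hyle hyt
    funext i
    have h1 : G i + x' i = G i := congrFun heq i
    have h2 : x' i = 0 := rmax_coe_add_cancel (g' i) (h1.trans (add_zero (G i)).symm)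
    show x i = 0
    rcases le_total (x i) (((-ε : ℝ)) : Rmax) with h | h
    · exfalso
      have h3 : (((-ε : ℝ)) : Rmax) = 0 := by
        rw [← h2]; exact (sup_eq_right.2 h).symm
      have h4 : (-ε : ℝ) = 0 := by exact_mod_cast h3
      linarith
    · rw [← h2]; exact (sup_eq_left.2 h).symm
  · rintro ⟨-, hmin⟩
    refine ⟨hg, ?_⟩
    intro y hyC hyle hyt
    obtain ⟨ε, hεpos, hQ⟩ := exists_goodEps A B G hg
    have hneg : (((-ε : ℝ)) : Rmax) ≤ 0 := by
      exact_mod_cast (by linarith : (-ε : ℝ) ≤ 0)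
    have hxT := mem_tangent_of_cone A B g' hQ hyC (fun i => hyle i)
    set x : Fin d → Rmax := fun i => (y i + (((-(g' i) : ℝ)) : Rmax)) ⊔ (((-ε : ℝ)) : Rmax)
      with hxdef
    have hx0 : x ≤ (fun _ => (0 : Rmax)) := by
      intro i
      refine sup_le ?_ hneg
      calc y i + (((-(g' i) : ℝ)) : Rmax) ≤ ((g' i : ℝ) : Rmax) + (((-(g' i) : ℝ)) : Rmax) :=
            add_le_add_left (hyle i) _
        _ = 0 := by rw [← WithBot.coe_add]; norm_num
    have hxt : x t = (fun _ => (0 : Rmax)) t := by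
      show (y t + _) ⊔ _ = (0 : Rmax)
      have hyt0 : y t = G t := hyt
      have : y t + (((-(g' t) : ℝ)) : Rmax) = 0 := by
        rw [hyt0]
        show ((g' t : ℝ) : Rmax) + _ = 0
        rw [← WithBot.coe_add]; norm_num
      rw [this]
      exact sup_eq_left.2 hneg
    have heq := hmin x hxT hx0 hxt
    funext i
    have h1 : (y i + (((-(g' i) : ℝ)) : Rmax)) ⊔ (((-ε : ℝ)) : Rmax) = 0 := congrFun heq i
    have h2 : y i + (((-(g' i) : ℝ)) : Rmax) = 0 := by
      rcases le_total (y i + (((-(g' i) : ℝ)) : Rmax)) (((-ε : ℝ)) : Rmax) with h | h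
      · exfalso
        have h3 : (((-ε : ℝ)) : Rmax) = 0 := by
          rw [← h1]; exact (sup_eq_right.2 h).symm
        have h4 : (-ε : ℝ) = 0 := by exact_mod_cast h3
        linarith
      · rw [← h1]; exact (sup_eq_left.2 h).symm
    show y i = ((g' i : ℝ) : Rmax)
    calc y i = y i + (((-(g' i) : ℝ)) : Rmax) + ((g' i : ℝ) : Rmax) :=
          (rmax_neg_add_cancel _ _).symm
      _ = 0 + ((g' i : ℝ) : Rmax) := by rw [h2]
      _ = ((g' i : ℝ) : Rmax) := zero_add _
end
end

section
/- Let C ⊆ R_max^d be a tropical cone defined by inequalities A·x ≤ B·x, and g ∈ C with all coordinates finite. Then g is extreme of type t in C if and only if the all-zeros vector 𝟙 is the unique element of T(g,C) ∩ {-∞, 0}^d whose t-th coordinate equals 0. -/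
open scoped Classical

noncomputable section

section Helpers

lemma le_dotp {d : ℕ} (c x : Fin d → Rmax) (i : Fin d) : c i + x i ≤ dotp c x :=
  Finset.le_sup (f := fun i => c i + x i) (Finset.mem_univ i)

lemma dotp_attain {d : ℕ} [Nonempty (Fin d)] (c x : Fin d → Rmax) :
    ∃ i, dotp c x = c i + x i := by
  obtain ⟨i, -, h⟩ := Finset.exists_mem_eq_sup Finset.univ Finset.univ_nonempty
    (fun i => c i + x i)
  exact ⟨i, h⟩

lemma mem_argmaxSet {d : ℕ} {c g : Fin d → Rmax} {i : Fin d} :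
    i ∈ argmaxSet c g ↔ c i + g i = dotp c g := by simp [argmaxSet]

lemma dotp_mono {d : ℕ} (c : Fin d → Rmax) {x y : Fin d → Rmax} (h : x ≤ y) :
    dotp c x ≤ dotp c y :=
  Finset.sup_mono_fun fun i _ => add_le_add_right (h i) (c i)

lemma sup_zero_exists {d : ℕ} {S : Finset (Fin d)} {x : Fin d → Rmax}
    (hx : ∀ i, x i = ⊥ ∨ x i = 0) (h : (0:Rmax) ≤ S.sup x) : ∃ j ∈ S, x j = 0 := by
  have hS : S.Nonempty := by
    rcases S.eq_empty_or_nonempty with h0 | h0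
    · rw [h0, Finset.sup_empty, le_bot_iff] at h
      simp at h
    · exact h0
  obtain ⟨j, hj, hje⟩ := Finset.exists_mem_eq_sup S hS x
  refine ⟨j, hj, ?_⟩
  rcases hx j with hb | h0'
  · rw [hje, hb, le_bot_iff] at h; simp at h
  · exact h0'

lemma hsmall (u v : Rmax) (huv : u < v) :
    ∀ᶠ (M : ℝ) in nhdsWithin (0:ℝ) (Set.Ioi 0), (M:Rmax) + u ≤ v := by
  induction u using WithBot.recBotCoe with
  | bot => exact Filter.Eventually.of_forall (fun M => by simp)
  | coe u' =>
    induction v using WithBot.recBotCoe with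
    | bot => exact absurd huv (by simp)
    | coe v' =>
      have huv' : u' < v' := by exact_mod_cast huv
      have h1 : ∀ᶠ (M : ℝ) in nhdsWithin (0:ℝ) (Set.Ioi 0), M < v' - u' := by
        apply Filter.Eventually.filter_mono nhdsWithin_le_nhds
        exact (isOpen_Iio.eventually_mem (show (0:ℝ) ∈ Set.Iio (v'-u') by simp [huv']))
      exact h1.mono fun M hM => by
        rw [← WithBot.coe_add, WithBot.coe_le_coe]; linarith

end Helpers

/-- Th. 2: `g` (all coordinates finite) is extreme of type `t` in
`C = {x | A·x ≤ B·x}` iff the all-zeros vector `𝟙` is the unique element of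
`T(g,C) ∩ {-∞,0}^d` whose `t`-th coordinate is `0`. -/
theorem stmt7 {d n : ℕ} (A B : Fin n → Fin d → Rmax) (g' : Fin d → ℝ) (t : Fin d)
    (hg : (fun i => ((g' i : ℝ) : Rmax)) ∈ coneOf A B) :
    ExtremeType (coneOf A B) (fun i => ((g' i : ℝ) : Rmax)) t ↔
      ((fun _ => (0 : Rmax)) ∈ tangentCone A B (fun i => ((g' i : ℝ) : Rmax)) ∧
        ∀ x ∈ tangentCone A B (fun i => ((g' i : ℝ) : Rmax)),
          (∀ i, x i = ⊥ ∨ x i = 0) → x t = 0 → x = fun _ => (0 : Rmax)) := by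
  haveI : Nonempty (Fin d) := ⟨t⟩
  set g : Fin d → Rmax := fun i => ((g' i : ℝ) : Rmax) with hgdef
  have hzeroT : (fun _ => (0:Rmax)) ∈ tangentCone A B g := by
    intro k hk
    obtain ⟨i, hi⟩ := dotp_attain (A k) g
    obtain ⟨j, hj⟩ := dotp_attain (B k) g
    have hA : (argmaxSet (A k) g).Nonempty := ⟨i, mem_argmaxSet.mpr hi.symm⟩
    have hB : (argmaxSet (B k) g).Nonempty := ⟨j, mem_argmaxSet.mpr hj.symm⟩
    rw [Finset.sup_const hA, Finset.sup_const hB]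
  constructor
  · rintro ⟨-, hmin⟩
    refine ⟨hzeroT, ?_⟩
    intro x hxT hx01 hxt
    have h1 : ∀ᶠ (M:ℝ) in nhdsWithin (0:ℝ) (Set.Ioi 0),
        ∀ k, dotp (A k) g < dotp (B k) g → (M:Rmax) + dotp (A k) g ≤ dotp (B k) g := by
      rw [Filter.eventually_all]
      intro k
      by_cases h : dotp (A k) g < dotp (B k) g
      · exact (hsmall _ _ h).mono fun M hM _ => hM
      · exact Filter.Eventually.of_forall fun M hc => absurd hc h
    have h2 : ∀ᶠ (M:ℝ) in nhdsWithin (0:ℝ) (Set.Ioi 0),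
        ∀ k i, A k i + g i < dotp (A k) g → (M:Rmax) + (A k i + g i) ≤ dotp (A k) g := by
      rw [Filter.eventually_all]
      intro k
      rw [Filter.eventually_all]
      intro i
      by_cases h : A k i + g i < dotp (A k) g
      · exact (hsmall _ _ h).mono fun M hM _ => hM
      · exact Filter.Eventually.of_forall fun M hc => absurd hc h
    have h3 : ∀ᶠ (M:ℝ) in nhdsWithin (0:ℝ) (Set.Ioi 0), 0 < M := by
      filter_upwards [self_mem_nhdsWithin] with M hM
      exact hM
    obtain ⟨M, hM1, hM2, hM0⟩ := (h1.and (h2.and h3)).exists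
    set y : Fin d → Rmax := fun i => ((if x i = 0 then g' i else g' i - M : ℝ) : Rmax)
      with hydef
    have hyle : y ≤ g := by
      intro i
      simp only [hydef, hgdef, WithBot.coe_le_coe]
      split_ifs <;> linarith
    have hMy : ∀ i, g i ≤ (M:Rmax) + y i := by
      intro i
      simp only [hydef, hgdef, ← WithBot.coe_add, WithBot.coe_le_coe]
      split_ifs <;> linarith
    have hlow : ∀ c : Fin d → Rmax, dotp c g ≤ (M:Rmax) + dotp c y := by
      intro c
      obtain ⟨i, hi⟩ := dotp_attain c g
      calc dotp c g = c i + g i := hi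
        _ ≤ c i + ((M:Rmax) + y i) := add_le_add_right (hMy i) _
        _ = (M:Rmax) + (c i + y i) := by rw [add_left_comm]
        _ ≤ (M:Rmax) + dotp c y := add_le_add_right (le_dotp c y i) _
    have hyC : y ∈ coneOf A B := by
      intro k
      rcases eq_or_ne (dotp (A k) g) ⊥ with habot | hane
      · have hAbot : ∀ i, A k i = ⊥ := by
          intro i
          have h := le_dotp (A k) g i
          rw [habot, le_bot_iff, WithBot.add_eq_bot] at h
          rcases h with h | h
          · exact h
          · exact absurd h (by simp [hgdef])
        have hb : dotp (A k) y = ⊥ := by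
          apply le_bot_iff.mp
          apply Finset.sup_le
          intro i _
          simp [hAbot i]
        rw [hb]; exact bot_le
      · rcases lt_or_eq_of_le (hg k) with hlt | heq
        · have h1 : (M:Rmax) + dotp (A k) y ≤ (M:Rmax) + dotp (B k) y :=
            calc (M:Rmax) + dotp (A k) y ≤ (M:Rmax) + dotp (A k) g :=
                  add_le_add_right (dotp_mono _ hyle) _
              _ ≤ dotp (B k) g := hM1 k hlt
              _ ≤ (M:Rmax) + dotp (B k) y := hlow (B k)
          exact (WithBot.add_le_add_iff_left WithBot.coe_ne_bot).mp h1
        · have hT := hxT k heq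
          by_cases hex : ∃ i ∈ argmaxSet (A k) g, x i = 0
          · obtain ⟨i, hiA, hxi⟩ := hex
            have h0le : (0:Rmax) ≤ (argmaxSet (A k) g).sup x := by
              rw [← hxi]; exact Finset.le_sup hiA
            obtain ⟨j, hjB, hxj⟩ := sup_zero_exists hx01 (h0le.trans hT)
            have hyj : y j = g j := by simp [hydef, hgdef, hxj]
            calc dotp (A k) y ≤ dotp (A k) g := dotp_mono _ hyle
              _ = dotp (B k) g := heq
              _ = B k j + g j := (mem_argmaxSet.mp hjB).symm
              _ = B k j + y j := by rw [hyj]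
              _ ≤ dotp (B k) y := le_dotp _ _ _
          · push_neg at hex
            obtain ⟨i0, hi0⟩ := dotp_attain (A k) y
            have key : (M:Rmax) + dotp (A k) y ≤ dotp (A k) g := by
              rw [hi0]
              by_cases hargm : A k i0 + g i0 = dotp (A k) g
              · have hxne := hex i0 (mem_argmaxSet.mpr hargm)
                have hyi : (M:Rmax) + y i0 = g i0 := by
                  simp only [hydef, hgdef, if_neg hxne, ← WithBot.coe_add,
                    WithBot.coe_inj]
                  ring
                have heqc : (M:Rmax) + (A k i0 + y i0) = dotp (A k) g := by
                  rw [add_left_comm, hyi, hargm]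
                exact le_of_eq heqc
              · have hlt' : A k i0 + g i0 < dotp (A k) g :=
                  lt_of_le_of_ne (le_dotp _ _ _) hargm
                calc (M:Rmax) + (A k i0 + y i0) ≤ (M:Rmax) + (A k i0 + g i0) :=
                      add_le_add_right (add_le_add_right (hyle i0) _) _
                  _ ≤ dotp (A k) g := hM2 k i0 hlt'
            have h1 : (M:Rmax) + dotp (A k) y ≤ (M:Rmax) + dotp (B k) y :=
              key.trans (heq ▸ hlow (B k))
            exact (WithBot.add_le_add_iff_left WithBot.coe_ne_bot).mp h1
    have hyt : y t = g t := by simp [hydef, hgdef, hxt]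
    have hyg := hmin y hyC hyle hyt
    funext i
    have hi := congrFun hyg i
    simp only [hydef, hgdef] at hi
    by_cases hxi : x i = 0
    · exact hxi
    · rw [if_neg hxi] at hi
      have hiM : g' i - M = g' i := by exact_mod_cast hi
      linarith
  · rintro ⟨-, huniq⟩
    refine ⟨hg, ?_⟩
    intro z hz hzle hzt
    set x : Fin d → Rmax := fun i => if z i = g i then (0:Rmax) else ⊥ with hxdef
    have hx01 : ∀ i, x i = ⊥ ∨ x i = 0 := by
      intro i
      by_cases h : z i = g i <;> simp [hxdef, h]
    have hxval : ∀ i, x i = 0 → z i = g i := by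
      intro i h
      by_contra hne
      rw [hxdef] at h
      simp only [if_neg hne] at h
      exact absurd h (by simp)
    have hxT : x ∈ tangentCone A B g := by
      intro k hk
      apply Finset.sup_le
      intro i hiA
      rcases hx01 i with hb | h0
      · rw [hb]; exact bot_le
      · have hzi : z i = g i := hxval i h0
        have hmem : A k i + g i = dotp (A k) g := mem_argmaxSet.mp hiA
        rcases eq_or_ne (dotp (A k) g) ⊥ with habot | hane
        · have hiB : i ∈ argmaxSet (B k) g := by
            rw [mem_argmaxSet, ← hk, habot]
            have h := le_dotp (B k) g i
            rw [← hk, habot, le_bot_iff] at h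
            exact h
          rw [h0, ← h0]
          exact Finset.le_sup hiB
        · have hAz : dotp (A k) g ≤ dotp (A k) z := by
            calc dotp (A k) g = A k i + g i := hmem.symm
              _ = A k i + z i := by rw [hzi]
              _ ≤ dotp (A k) z := le_dotp _ _ _
          have hBz : dotp (B k) z = dotp (A k) g := by
            apply le_antisymm
            · calc dotp (B k) z ≤ dotp (B k) g := dotp_mono _ hzle
                _ = dotp (A k) g := hk.symm
            · exact hAz.trans (hz k)
          obtain ⟨j, hj⟩ := dotp_attain (B k) z
          have hBj : B k j ≠ ⊥ := by
            intro hbb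
            exact hane (by rw [← hBz, hj, hbb, WithBot.bot_add])
          have hjg : B k j + g j = dotp (B k) g := by
            apply le_antisymm (le_dotp _ _ _)
            calc dotp (B k) g = dotp (A k) g := hk.symm
              _ = dotp (B k) z := hBz.symm
              _ = B k j + z j := hj
              _ ≤ B k j + g j := add_le_add_right (hzle j) _
          have hzj : z j = g j := WithBot.add_left_cancel hBj
            (hj.symm.trans (hBz.trans (hk.trans hjg.symm)))
          have hxj : x j = 0 := by rw [hxdef]; simp [hzj]
          rw [h0, ← hxj]
          exact Finset.le_sup (mem_argmaxSet.mpr hjg)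
    have hxz := huniq x hxT hx01 (by rw [hxdef]; simp [hzt])
    funext i
    exact hxval i (congrFun hxz i)
end
end

section
/- Let C ⊆ R_max^d be a tropical cone defined by A·x ≤ B·x, g ∈ C with all finite coordinates, and let H(g,C) be the directed hypergraph with node set {1,...,d} and one hyperedge (argmax(B_k·g), argmax(A_k·g)) for each row k with A_k·g = B_k·g. Then for all l, t ∈ {1,...,d}, the statement [for all x ∈ T(g,C) ∩ {-∞,0}^d, x_l = -∞ implies x_t = -∞] holds if and only if t is reachable from l in the hypergraph H(g,C). -/
open scoped Classical

noncomputable section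

/-- Reachability in a directed hypergraph with hyperedges `(tail, head)`:
`u ⇝ u`, and if every node of the tail of a hyperedge is reachable from `u`
then so is every node of its head. -/
inductive HReach {ν : Type*} (E : Set (Set ν × Set ν)) : ν → ν → Prop
  | refl (u : ν) : HReach E u u
  | step (u v : ν) (e : Set ν × Set ν) (he : e ∈ E) (hv : v ∈ e.2)
      (ht : ∀ w ∈ e.1, HReach E u w) : HReach E u v

/-- The strongly connected component of `u` for a reachability relation `r`. -/
def SCCof {ν : Type*} (r : ν → ν → Prop) (u : ν) : Set ν := { v | r u v ∧ r v u }

/-- `C` is a strongly connected component for the reachability relation `r`. -/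
def IsSCC {ν : Type*} (r : ν → ν → Prop) (C : Set ν) : Prop := ∃ u, C = SCCof r u

/-- The order on SCCs: `C₁ ⪯ C₂` iff some representative of `C₁` is reachable
from some representative of `C₂`. -/
def sccLE {ν : Type*} (r : ν → ν → Prop) (C₁ C₂ : Set ν) : Prop :=
  ∃ u ∈ C₁, ∃ v ∈ C₂, r v u

/-- `C` is a minimal SCC for the order `⪯`. -/
def MinSCC {ν : Type*} (r : ν → ν → Prop) (C : Set ν) : Prop :=
  IsSCC r C ∧ ∀ D, IsSCC r D → sccLE r D C → D = C

/-- Edges of the digraph `G(H)` associated to a hypergraph: pairs `(t, h)`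
such that some hyperedge has singleton tail `{t}` and `h` in its head. -/
def graphEdge {ν : Type*} (E : Set (Set ν × Set ν)) : ν → ν → Prop :=
  fun t h => ∃ e ∈ E, e.1 = {t} ∧ h ∈ e.2

/-- Reachability in the digraph `G(H)`. -/
def GReach {ν : Type*} (E : Set (Set ν × Set ν)) : ν → ν → Prop :=
  Relation.ReflTransGen (graphEdge E)

/-- The directed hypergraph `H(g,C)` attached to the tangent cone: one
hyperedge `(argmax(B_k·g), argmax(A_k·g))` for each saturated row `k`. -/
def hyperOf {d n : ℕ} (A B : Fin n → Fin d → Rmax) (g : Fin d → Rmax) :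
    Set (Set (Fin d) × Set (Fin d)) :=
  { e | ∃ k, dotp (A k) g = dotp (B k) g ∧
      e = ({ i | B k i + g i = dotp (B k) g }, { i | A k i + g i = dotp (A k) g }) }


/-- Prop. 6: for `g ∈ C` with all coordinates finite, the propagation statement
"every `{-∞,0}`-vector of `T(g,C)` with `x l = -∞` has `x t = -∞`" holds iff
`t` is reachable from `l` in the hypergraph `H(g,C)`. -/
theorem stmt9 {d n : ℕ} (A B : Fin n → Fin d → Rmax) (g' : Fin d → ℝ)
    (hg : (fun i => ((g' i : ℝ) : Rmax)) ∈ coneOf A B) :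
    ∀ l t : Fin d,
      ((∀ x ∈ tangentCone A B (fun i => ((g' i : ℝ) : Rmax)),
          (∀ i, x i = ⊥ ∨ x i = 0) → x l = ⊥ → x t = ⊥) ↔
        HReach (hyperOf A B (fun i => ((g' i : ℝ) : Rmax))) l t) := by
  intro l t
  set g : Fin d → Rmax := fun i => ((g' i : ℝ) : Rmax) with hgdef
  constructor
  · intro h
    by_contra hnr
    set x : Fin d → Rmax := fun i => if HReach (hyperOf A B g) l i then ⊥ else 0 with hx
    have hval : ∀ i, x i = ⊥ ∨ x i = 0 := by
      intro i
      by_cases hi : HReach (hyperOf A B g) l i <;> simp [hx, hi]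
    have hmem : x ∈ tangentCone A B g := by
      intro k hk
      by_cases hall : ∀ j ∈ argmaxSet (B k) g, HReach (hyperOf A B g) l j
      · have hhead : ∀ i ∈ argmaxSet (A k) g, HReach (hyperOf A B g) l i := by
          intro i hi
          refine HReach.step l i ({ j | B k j + g j = dotp (B k) g },
            { j | A k j + g j = dotp (A k) g }) ⟨k, hk, rfl⟩ ?_ ?_
          · simpa [argmaxSet] using hi
          · intro w hw
            exact hall w (by simpa [argmaxSet] using hw)
        have h1 : (argmaxSet (A k) g).sup x ≤ ⊥ :=
          Finset.sup_le fun i hi => by simp [hx, hhead i hi]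
        exact le_trans h1 bot_le
      · push_neg at hall
        obtain ⟨j, hj, hjn⟩ := hall
        have hj0 : x j = 0 := by simp [hx, hjn]
        have h1 : (argmaxSet (A k) g).sup x ≤ 0 := by
          apply Finset.sup_le
          intro i _
          rcases hval i with h' | h' <;> simp [h']
        have h2 : (0 : Rmax) ≤ (argmaxSet (B k) g).sup x :=
          le_trans (le_of_eq hj0.symm) (Finset.le_sup hj)
        exact h1.trans h2
    have hxl : x l = ⊥ := by simp [hx, HReach.refl]
    have := h x hmem hval hxl
    simp [hx, hnr] at this
  · intro hr x hxC _ hxl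
    revert hxl
    induction hr with
    | refl => exact fun h => h
    | step v e he hv ht ih =>
      intro hul
      obtain ⟨k, hk, hek⟩ := he
      have hsat := hxC k hk
      have hv' : v ∈ argmaxSet (A k) g := by
        rw [hek] at hv
        simpa [argmaxSet] using hv
      have hB : (argmaxSet (B k) g).sup x = ⊥ := by
        apply le_bot_iff.mp
        apply Finset.sup_le
        intro w hw
        have hw1 : w ∈ e.1 := by
          rw [hek]
          simpa [argmaxSet] using hw
        exact le_of_eq (ih w hw1 hul)
      exact le_bot_iff.mp (le_trans (Finset.le_sup hv') (hsat.trans_eq hB))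
end
end

section
/- Let H = (N,E) be a directed hypergraph and x, y ∈ N two nodes in the same strongly connected component of H. Let f map x and y to a fresh node z and every other node to itself, and let f(H) be the hypergraph with nodes f(N) and hyperedges {(f(T(e)), f(H(e))) | e ∈ E}. Then for all u, v ∈ N, v is reachable from u in H if and only if f(v) is reachable from f(u) in f(H). -/
open scoped Classical

noncomputable section

lemma HReach.trans {ν : Type*} {E : Set (Set ν × Set ν)} {u v w : ν}
    (h1 : HReach E u v) (h2 : HReach E v w) : HReach E u w := by
  induction h2 with
  | refl => exact h1
  | step w e he hv ht ih => exact HReach.step u w e he hv ih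

/-- Prop. 8: merging two nodes `x ≡ y` of a same SCC into a fresh node `z`
does not alter the reachability relation of the hypergraph. -/
theorem stmt14 {ν : Type*} (E : Set (Set ν × Set ν)) (x y : ν)
    (hxy : HReach E x y ∧ HReach E y x) :
    ∀ u v : ν,
      HReach E u v ↔
        HReach
          ((fun e : Set ν × Set ν =>
              ((fun n => if n = x ∨ n = y then Sum.inr () else Sum.inl n) '' e.1,
               (fun n => if n = x ∨ n = y then Sum.inr () else Sum.inl n) '' e.2)) '' E)
          (if u = x ∨ u = y then Sum.inr () else Sum.inl u)
          (if v = x ∨ v = y then Sum.inr () else Sum.inl v) := by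
  set f : ν → ν ⊕ Unit := fun n => if n = x ∨ n = y then Sum.inr () else Sum.inl n with hf
  set E' := ((fun e : Set ν × Set ν => (f '' e.1, f '' e.2)) '' E) with hE'
  -- key: f n = f m → HReach E n m
  have hfeq : ∀ n m : ν, f n = f m → HReach E n m := by
    intro n m h
    simp only [hf] at h
    by_cases hn : n = x ∨ n = y
    · by_cases hm : m = x ∨ m = y
      · rcases hn with rfl | rfl <;> rcases hm with rfl | rfl
        · exact HReach.refl _
        · exact hxy.1
        · exact hxy.2
        · exact HReach.refl _
      · simp [hn, hm] at h
    · by_cases hm : m = x ∨ m = y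
      · simp [hn, hm] at h
      · simp only [if_neg hn, if_neg hm, Sum.inl.injEq] at h
        exact h ▸ HReach.refl n
  intro u v
  constructor
  · intro h
    induction h with
    | refl => exact HReach.refl _
    | step v e he hv ht ih =>
      exact HReach.step _ _ (f '' e.1, f '' e.2) ⟨e, he, rfl⟩ ⟨v, hv, rfl⟩
        (by rintro w ⟨t, htl, rfl⟩; exact ih t htl)
  · intro h
    have key : ∀ w, HReach E' (f u) w → ∀ n, f n = w → HReach E u n := by
      intro w h
      induction h with
      | refl =>
        intro n hn
        exact hfeq u n hn.symm
      | step w e' he' hw ht ih =>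
        obtain ⟨e, he, rfl⟩ := he'
        obtain ⟨v', hv', rfl⟩ := hw
        intro n hn
        have hv'' : HReach E u v' :=
          HReach.step u v' e he hv' (fun t htl => ih (f t) ⟨t, htl, rfl⟩ t rfl)
        exact hv''.trans (hfeq v' n hn.symm)
    exact key _ h v rfl
end
end

section
/- Let C ⊆ R_max^d be a tropical polyhedral cone and g ∈ C. Then g is extreme of type t in C if and only if there exists a neighborhood V of g such that g is a minimal element of {x ∈ C ∩ V | x_t = g_t} for the coordinatewise order (i.e., extremality is a local property). -/
open scoped Classical

noncomputable section

instance : OrderTopology Rmax := ⟨rfl⟩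

-- key tendsto lemma
lemma aux_tendsto (xi gi : Rmax) (hx : xi ≤ gi) :
    Filter.Tendsto (fun α : ℝ => xi ⊔ ((α : Rmax) + gi)) (nhdsWithin 0 (Set.Iio 0)) (nhds gi) := by
  rw [tendsto_order]
  constructor
  · intro b hb
    -- eventually b < xi ⊔ (α + gi)
    cases gi with
    | none => exact absurd hb (not_lt_bot)
    | some c =>
      cases b with
      | none =>
        filter_upwards with α
        exact lt_of_lt_of_le (by simp [← WithBot.coe_add] : (⊥ : Rmax) < ((α : Rmax) + c)) le_sup_right
      | some b =>
        have hbc : b - c < 0 := by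
          have := WithBot.coe_lt_coe.1 hb; linarith
        have hmem : Set.Ioi (b - c) ∈ nhdsWithin (0:ℝ) (Set.Iio 0) :=
          nhdsWithin_le_nhds (Ioi_mem_nhds hbc)
        filter_upwards [hmem] with α hα
        refine lt_of_lt_of_le ?_ le_sup_right
        simp only [WithBot.some_eq_coe]
        rw [← WithBot.coe_add, WithBot.coe_lt_coe]
        simp only [Set.mem_Ioi] at hα; linarith
  · intro b hb
    have hneg : Set.Iio (0:ℝ) ∈ nhdsWithin (0:ℝ) (Set.Iio 0) := self_mem_nhdsWithin
    filter_upwards [hneg] with α hα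
    refine lt_of_le_of_lt ?_ hb
    refine sup_le hx ?_
    calc (α : Rmax) + gi ≤ 0 + gi := by
          exact add_le_add_left (WithBot.coe_le_coe.2 (le_of_lt hα)) gi
      _ = gi := zero_add gi


/-- Prop.: extremality is a local property: `g ∈ C` is extreme of type `t`
iff there is a neighborhood `V` of `g` in which `g` is minimal among the
elements of `C ∩ V` whose `t`-th coordinate equals `g t`. -/
theorem stmt17 {d : ℕ} (C : Set (Fin d → Rmax)) (hC : IsTropCone C)
    (g : Fin d → Rmax) (hg : g ∈ C) (t : Fin d) :
    ExtremeType C g t ↔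
      ∃ V ∈ nhds g, ∀ x ∈ C, x ∈ V → x ≤ g → x t = g t → x = g := by
  rw [ExtremeType]
  obtain ⟨hC1, hC2⟩ := hC
  constructor
  · rintro ⟨-, h⟩
    exact ⟨Set.univ, Filter.univ_mem, fun x hx _ => h x hx⟩
  · rintro ⟨V, hV, h⟩
    refine ⟨hg, fun x hx hxg hxt => ?_⟩
    -- the curve y α = x ⊔ (α + g)
    set f : ℝ → (Fin d → Rmax) := fun α i => x i ⊔ ((α : Rmax) + g i) with hf
    have htend : Filter.Tendsto f (nhdsWithin 0 (Set.Iio 0)) (nhds g) := by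
      rw [tendsto_pi_nhds]
      exact fun i => aux_tendsto (x i) (g i) (hxg i)
    have hVf : ∀ᶠ α in nhdsWithin (0:ℝ) (Set.Iio 0), f α ∈ V ∧ α < 0 := by
      filter_upwards [htend hV, self_mem_nhdsWithin] with α h1 h2
      exact ⟨h1, h2⟩
    obtain ⟨α, hαV, hα0⟩ := hVf.exists
    -- f α ∈ C
    have hfC : f α ∈ C := hC1 x hx _ (hC2 g hg (α : Rmax))
    have hle : ∀ i, ((α:Rmax) + g i) ≤ g i := fun i => by
      calc (α : Rmax) + g i ≤ 0 + g i :=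
            add_le_add_left (WithBot.coe_le_coe.2 (le_of_lt hα0)) (g i)
        _ = g i := zero_add (g i)
    have hflg : f α ≤ g := fun i => sup_le (hxg i) (hle i)
    have hft : f α t = g t := by
      simp only [hf]
      rw [hxt]
      exact sup_eq_left.2 (hle t)
    have heq : f α = g := h (f α) hfC hαV hflg hft
    -- conclude x = g
    funext i
    have hi : x i ⊔ ((α:Rmax) + g i) = g i := congrFun heq i
    rcases eq_or_lt_of_le (hle i) with hcase | hcase
    · -- α + g i = g i forces g i = ⊥
      cases hgi : g i with
      | none => exact le_antisymm (by simpa [hgi] using hxg i) (by exact bot_le)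
      | some c =>
        exfalso
        rw [hgi] at hcase
        simp only [WithBot.some_eq_coe] at hcase
        rw [← WithBot.coe_add, WithBot.coe_inj] at hcase
        linarith
    · -- α + g i < g i, so sup equation forces x i = g i
      refine le_antisymm (hxg i) ?_
      by_contra hni
      have hxi : x i < g i := lt_of_le_of_ne (hxg i) (fun hh => hni (le_of_eq hh.symm))
      exact absurd hi (ne_of_lt (sup_lt_iff.2 ⟨hxi, hcase⟩))
end
end
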